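/- arXiv:2004.08895 — 4 statements merged into one kernel-verified Lean document; each statement's English description precedes it below -/
import Mathlib

section
/- Let f(z) = ∑ aₙ zⁿ be analytic on the open unit disk with |f(z)| < 1 for all |z| < 1, and let a = |a₀|. Then |aₖ| ≤ 1 - a² for every k ≥ 1. -/
open Metric Complex
open scoped NNReal ENNReal

lemma mobius_lt {a w : ℂ} (ha : ‖a‖ < 1) (hw : ‖w‖ < 1) :
    ‖w - a‖ < ‖1 - (starRingEnd ℂ) a * w‖ := by
  have h : Complex.normSq (1 - (starRingEnd ℂ) a * w) - Complex.normSq (w - a)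
      = (1 - Complex.normSq a) * (1 - Complex.normSq w) := by
    simp [Complex.normSq_apply, Complex.sub_re, Complex.sub_im, Complex.mul_re, Complex.mul_im,
      Complex.conj_re, Complex.conj_im]
    ring
  have ha' : Complex.normSq a < 1 := by
    have := Complex.sq_norm a
    nlinarith [ha, norm_nonneg a, Complex.sq_norm a]
  have hw' : Complex.normSq w < 1 := by
    nlinarith [hw, norm_nonneg w, Complex.sq_norm w]
  have hlt : Complex.normSq (w - a) < Complex.normSq (1 - (starRingEnd ℂ) a * w) := by
    nlinarith
  calc ‖w - a‖ = Real.sqrt (Complex.normSq (w - a)) := by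
        rw [Complex.norm_def]
    _ < Real.sqrt (Complex.normSq (1 - (starRingEnd ℂ) a * w)) :=
        Real.sqrt_lt_sqrt (Complex.normSq_nonneg _) hlt
    _ = ‖1 - (starRingEnd ℂ) a * w‖ := by rw [Complex.norm_def]

lemma schwarz_pick_zero (H : ℂ → ℂ)
    (hd : DifferentiableOn ℂ H (ball (0:ℂ) 1))
    (hb : ∀ z : ℂ, ‖z‖ < 1 → ‖H z‖ < 1) :
    ‖deriv H 0‖ ≤ 1 - ‖H 0‖ ^ 2 := by
  set a := H 0 with ha
  have ha1 : ‖a‖ < 1 := hb 0 (by simp)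
  have hden : ∀ z : ℂ, ‖z‖ < 1 → (1 : ℂ) - (starRingEnd ℂ) a * H z ≠ 0 := by
    intro z hz h
    have h1 : ‖H z - a‖ < ‖(1:ℂ) - (starRingEnd ℂ) a * H z‖ := mobius_lt ha1 (hb z hz)
    rw [h, norm_zero] at h1
    exact absurd h1 (not_lt.2 (norm_nonneg _))
  set g : ℂ → ℂ := fun z => (H z - a) / (1 - (starRingEnd ℂ) a * H z) with hg
  have hgd : DifferentiableOn ℂ g (ball (0:ℂ) 1) := by
    apply DifferentiableOn.div
    · exact hd.sub_const a
    · exact (differentiableOn_const _).sub ((differentiableOn_const _).mul hd)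
    · intro z hz
      exact hden z (by simpa using hz)
  have hg0 : g 0 = 0 := by simp [hg]; exact Or.inl (by rw [ha, sub_self])
  have hmaps : Set.MapsTo g (ball (0:ℂ) 1) (ball (g 0) 1) := by
    intro z hz
    rw [hg0, mem_ball_zero_iff]
    have hz' : ‖z‖ < 1 := by simpa using hz
    rw [hg]
    simp only
    rw [norm_div, div_lt_one (lt_of_le_of_lt (norm_nonneg _) (mobius_lt ha1 (hb z hz')))]
    exact mobius_lt ha1 (hb z hz')
  have hderiv : ‖deriv g 0‖ ≤ 1 := by
    have := Complex.norm_deriv_le_div_of_mapsTo_ball hgd (hmaps.mono_right ball_subset_closedBall) one_pos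
    simpa using this
  -- compute deriv g 0
  have hH0 : DifferentiableAt ℂ H 0 := (hd.differentiableAt (isOpen_ball.mem_nhds (by simp)))
  have h1 : HasDerivAt H (deriv H 0) 0 := hH0.hasDerivAt
  have hu : HasDerivAt (fun z => H z - a) (deriv H 0) 0 := h1.sub_const a
  have hv : HasDerivAt (fun z => (1:ℂ) - (starRingEnd ℂ) a * H z)
      (0 - (starRingEnd ℂ) a * deriv H 0) 0 := (hasDerivAt_const _ _).sub (h1.const_mul _)
  have hvne : (1:ℂ) - (starRingEnd ℂ) a * H 0 ≠ 0 := hden 0 (by simp)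
  have hgder : HasDerivAt g ((deriv H 0 * (1 - (starRingEnd ℂ) a * H 0) -
      (H 0 - a) * (0 - (starRingEnd ℂ) a * deriv H 0)) / (1 - (starRingEnd ℂ) a * H 0) ^ 2) 0 :=
    hu.div hv hvne
  have hsimp : deriv g 0 = deriv H 0 / (1 - (starRingEnd ℂ) a * a) := by
    rw [hgder.deriv, ← ha]
    rw [← ha] at hvne
    rw [sub_self, zero_mul, sub_zero, pow_two, mul_div_mul_right _ _ hvne]
  have hcm : (starRingEnd ℂ) a * a = (Complex.normSq a : ℂ) := by
    rw [mul_comm, Complex.mul_conj]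
  have hnorm : ‖(1:ℂ) - (starRingEnd ℂ) a * a‖ = 1 - ‖a‖ ^ 2 := by
    rw [hcm]
    have : ((1:ℂ) - (Complex.normSq a : ℂ)) = ((1 - Complex.normSq a : ℝ) : ℂ) := by push_cast; ring
    have h2 : Complex.normSq a = ‖a‖ ^ 2 := by rw [Complex.sq_norm]
    rw [this, Complex.norm_real, Real.norm_eq_abs, h2]
    exact abs_of_nonneg (by nlinarith [ha1, norm_nonneg a])
  have := hsimp ▸ hderiv
  rw [norm_div, hnorm, div_le_one (by nlinarith [norm_nonneg a])] at this
  linarith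

lemma memb_aux {w : ℂ} {t : ℝ≥0} (h : ‖w‖ < (t : ℝ)) :
    w ∈ Metric.eball (0 : ℂ) (t : ℝ≥0∞) := by
  rw [Metric.emetric_ball_nnreal, mem_ball_zero_iff]; exact h

open FormalMultilinearSeries

/-- Coefficient estimate `|aₖ| ≤ 1 - |a₀|²` for self-maps of the unit disk. -/
theorem coeff_estimate (f : ℂ → ℂ)
    (hd : DifferentiableOn ℂ f (Metric.ball (0 : ℂ) 1))
    (hb : ∀ z : ℂ, ‖z‖ < 1 → ‖f z‖ < 1) :
    ∀ k : ℕ, 1 ≤ k →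
      ‖iteratedDeriv k f 0 / (Nat.factorial k : ℂ)‖ ≤ 1 - ‖f 0‖ ^ 2 := by
  intro k hk
  have hk0 : k ≠ 0 := by omega
  set A : ℕ → ℂ := fun m => iteratedDeriv m f 0 / (Nat.factorial m : ℂ) with hA
  -- power series on balls of radius t < 1
  have hPt : ∀ t : ℝ≥0, 0 < t → (t : ℝ) < 1 →
      HasFPowerSeriesOnBall f (cauchyPowerSeries f 0 t) 0 t := by
    intro t ht ht1
    exact (hd.mono (closedBall_subset_ball ht1)).hasFPowerSeriesOnBall ht
  have hcoeffA : ∀ t : ℝ≥0, 0 < t → (t : ℝ) < 1 → ∀ m : ℕ,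
      ((cauchyPowerSeries f 0 t) m fun _ => (1:ℂ)) = A m := by
    intro t ht ht1 m
    have h1 := (hPt t ht ht1).factorial_smul (1 : ℂ) m
    rw [hA]
    simp only
    rw [iteratedDeriv_eq_iteratedFDeriv, ← h1, nsmul_eq_mul]
    rw [eq_comm, mul_comm, mul_div_assoc, div_self (by exact_mod_cast Nat.factorial_ne_zero m),
      mul_one]
  -- the averaged series
  set q : FormalMultilinearSeries ℂ ℂ ℂ := ofScalars ℂ (fun n => A (n * k)) with hqdef
  have hAnorm : ∀ t : ℝ≥0, 0 < t → (t : ℝ) < 1 → ∀ m : ℕ,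
      ‖A m‖ ≤ ‖(cauchyPowerSeries f 0 t) m‖ := by
    intro t ht ht1 m
    rw [← hcoeffA t ht ht1 m]
    have := ((cauchyPowerSeries f 0 t) m).le_opNorm (fun _ => (1:ℂ))
    simpa using this
  have hrad : 1 ≤ q.radius := by
    refine ENNReal.le_of_forall_nnreal_lt fun r hr => ?_
    have hr1 : (r : ℝ) < 1 := by exact_mod_cast hr
    set s : ℝ≥0 := r ^ ((k : ℝ)⁻¹) with hsdef
    have hs1 : s < 1 := NNReal.rpow_lt_one (by exact_mod_cast hr) (by positivity)
    have hsk : (s : ℝ) ^ k = (r : ℝ) := by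
      rw [hsdef]
      push_cast
      rw [← Real.rpow_natCast ((r:ℝ) ^ ((k:ℝ)⁻¹)) k, ← Real.rpow_mul r.coe_nonneg,
        inv_mul_cancel₀ (by exact_mod_cast hk0), Real.rpow_one]
    set t : ℝ≥0 := (s + 1) / 2 with htdef
    have hts : s < t := by
      rw [htdef]
      rw [← NNReal.coe_lt_coe]
      push_cast
      rw [← NNReal.coe_lt_coe] at hs1
      push_cast at hs1
      linarith
    have ht0 : 0 < t := lt_of_le_of_lt (zero_le : 0 ≤ s) hts
    have ht1 : (t : ℝ) < 1 := by
      rw [htdef]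
      push_cast
      rw [← NNReal.coe_lt_coe] at hs1
      push_cast at hs1
      linarith
    have hst : (s : ℝ≥0∞) < (cauchyPowerSeries f 0 t).radius :=
      lt_of_lt_of_le (by exact_mod_cast hts) (hPt t ht0 ht1).r_le
    obtain ⟨C, hC0, hC⟩ := (cauchyPowerSeries f 0 t).norm_mul_pow_le_of_lt_radius hst
    refine q.le_radius_of_bound C fun n => ?_
    have hqn : ‖q n‖ = ‖A (n * k)‖ := ofScalars_norm _ _ _
    calc ‖q n‖ * (r : ℝ) ^ n ≤ ‖(cauchyPowerSeries f 0 t) (n * k)‖ * ((s : ℝ) ^ k) ^ n := by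
          rw [hsk]
          exact mul_le_mul_of_nonneg_right (hqn ▸ hAnorm t ht0 ht1 (n * k)) (by positivity)
      _ = ‖(cauchyPowerSeries f 0 t) (n * k)‖ * (s : ℝ) ^ (n * k) := by
          rw [← pow_mul, mul_comm k n]
      _ ≤ C := hC (n * k)
  set H : ℂ → ℂ := q.sum with hHdef
  have hq : HasFPowerSeriesOnBall H q 0 ((1:ℝ≥0) : ℝ≥0∞) := by
    rw [ENNReal.coe_one]
    exact (q.hasFPowerSeriesOnBall (lt_of_lt_of_le one_pos hrad)).mono one_pos hrad
  have hdH : DifferentiableOn ℂ H (ball (0:ℂ) 1) := by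
    have := hq.differentiableOn
    rwa [Metric.emetric_ball_nnreal, NNReal.coe_one] at this
  -- roots of unity setup
  set ζ : ℂ := Complex.exp (2 * Real.pi * Complex.I / k) with hζdef
  have hζ : IsPrimitiveRoot ζ k := Complex.isPrimitiveRoot_exp k hk0
  have hζ1 : ‖ζ‖ = 1 := Complex.norm_eq_one_of_pow_eq_one hζ.pow_eq_one hk0
  -- H is bounded by 1 on the unit ball
  have hbH : ∀ z : ℂ, ‖z‖ < 1 → ‖H z‖ < 1 := by
    intro z hz
    obtain ⟨u, hu⟩ : ∃ u : ℂ, u ^ k = z := ⟨z ^ ((k : ℂ)⁻¹), Complex.cpow_nat_inv_pow z hk0⟩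
    have hu1 : ‖u‖ < 1 := by
      by_contra h
      push_neg at h
      have h2 : (1 : ℝ) ≤ ‖z‖ := by
        rw [← hu, norm_pow]
        calc (1:ℝ) = 1 ^ k := (one_pow k).symm
          _ ≤ ‖u‖ ^ k := pow_le_pow_left₀ (by norm_num) h k
      linarith
    have hju : ∀ j : ℕ, ‖ζ ^ j * u‖ < 1 := by
      intro j
      rw [norm_mul, norm_pow, hζ1, one_pow, one_mul]
      exact hu1
    -- a radius t between ‖u‖ and 1
    obtain ⟨tr, htu, htr1⟩ := exists_between hu1
    have htr0 : 0 ≤ tr := le_trans (norm_nonneg u) (le_of_lt htu)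
    set t : ℝ≥0 := ⟨tr, htr0⟩ with htdef
    have ht0 : 0 < t := by
      rw [← NNReal.coe_lt_coe]
      exact lt_of_le_of_lt (norm_nonneg u) htu
    have ht1 : (t : ℝ) < 1 := htr1
    set p : FormalMultilinearSeries ℂ ℂ ℂ := cauchyPowerSeries f 0 t with hpdef
    have hp : HasFPowerSeriesOnBall f p 0 t := hPt t ht0 ht1
    have hcoe : ∀ m, p.coeff m = A m := by
      intro m
      exact hcoeffA t ht0 ht1 m
    -- each f (ζ^j u) as a sum
    have hsumf : ∀ j : ℕ, HasSum (fun m => A m * (ζ ^ j * u) ^ m) (f (ζ ^ j * u)) := by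
      intro j
      have hmem : (ζ ^ j * u : ℂ) ∈ Metric.eball (0:ℂ) (t : ℝ≥0∞) := by
        apply memb_aux
        rw [norm_mul, norm_pow, hζ1, one_pow, one_mul]
        exact htu
      have h2 := hp.hasSum hmem
      simp only [zero_add] at h2
      convert h2 using 2 with m
      · rfl
      rw [FormalMultilinearSeries.apply_eq_pow_smul_coeff, smul_eq_mul, hcoe, mul_comm]
    set F : ℕ → ℂ := fun m => A m * u ^ m * (∑ j ∈ Finset.range k, (ζ ^ m) ^ j) with hF
    have hFsum : HasSum F (∑ j ∈ Finset.range k, f (ζ ^ j * u)) := by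
      have h1 : HasSum (fun m => ∑ j ∈ Finset.range k, A m * (ζ ^ j * u) ^ m)
          (∑ j ∈ Finset.range k, f (ζ ^ j * u)) :=
        hasSum_sum fun j _ => hsumf j
      have hFeq : F = fun m => ∑ j ∈ Finset.range k, A m * (ζ ^ j * u) ^ m := by
        funext m
        rw [hF]
        simp only
        rw [Finset.mul_sum]
        refine Finset.sum_congr rfl fun j _ => ?_
        rw [mul_pow, ← pow_mul, ← pow_mul, mul_comm j m, pow_mul]
        ring
      rw [hFeq]
      exact h1
    have hFmul : ∀ n : ℕ, F (n * k) = (k : ℂ) * (A (n * k) * (u ^ k) ^ n) := by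
      intro n
      have hone : ζ ^ (n * k) = 1 := (hζ.pow_eq_one_iff_dvd _).2 ⟨n, mul_comm n k⟩
      rw [hF]
      simp only [hone, one_pow, Finset.sum_const, Finset.card_range, nsmul_eq_mul, mul_one]
      rw [← pow_mul, mul_comm k n]
      ring
    have hFzero : ∀ m : ℕ, m ∉ Set.range (fun n : ℕ => n * k) → F m = 0 := by
      intro m hm
      have hdvd : ¬ (k ∣ m) := by
        rintro ⟨c, hc⟩
        exact hm ⟨c, by rw [hc]; ring⟩
      have hne : ζ ^ m ≠ 1 := fun h => hdvd ((hζ.pow_eq_one_iff_dvd m).1 h)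
      have hzero : (∑ j ∈ Finset.range k, (ζ ^ m) ^ j) = 0 := by
        rw [geom_sum_eq hne, ← pow_mul, mul_comm m k, pow_mul, hζ.pow_eq_one, one_pow,
          sub_self, zero_div]
      rw [hF]
      simp [hzero]
    have hinj : Function.Injective (fun n : ℕ => n * k) := fun a b h =>
      Nat.eq_of_mul_eq_mul_right (Nat.pos_of_ne_zero hk0) h
    have hFsum' : HasSum (fun n => F (n * k)) (∑ j ∈ Finset.range k, f (ζ ^ j * u)) :=
      (hinj.hasSum_iff hFzero).2 hFsum
    have hHsum : HasSum (fun n => A (n * k) * (u ^ k) ^ n) (H (u ^ k)) := by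
      have hmem : (u ^ k : ℂ) ∈ Metric.eball (0:ℂ) ((1:ℝ≥0) : ℝ≥0∞) := by
        apply memb_aux
        rw [norm_pow, NNReal.coe_one]
        exact pow_lt_one₀ (norm_nonneg u) hu1 hk0
      have h2 := hq.hasSum hmem
      simp only [zero_add] at h2
      convert h2 using 2 with n
      · rfl
      rw [hqdef, ofScalars_apply_eq, smul_eq_mul, mul_comm]
    have hdiv : HasSum (fun n => A (n * k) * (u ^ k) ^ n)
        ((∑ j ∈ Finset.range k, f (ζ ^ j * u)) / k) := by
      have h2 := hFsum'.div_const (k : ℂ)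
      have hk0' : (k : ℂ) ≠ 0 := by exact_mod_cast hk0
      convert h2 using 2 with n
      · rfl
      rw [hFmul]
      field_simp
    have hHz : H z = (∑ j ∈ Finset.range k, f (ζ ^ j * u)) / k := by
      rw [← hu]
      exact hHsum.unique hdiv
    rw [hHz, norm_div]
    have hnormk : ‖(k : ℂ)‖ = (k : ℝ) := by simp
    rw [hnormk, div_lt_one (by exact_mod_cast Nat.pos_of_ne_zero hk0)]
    calc ‖∑ j ∈ Finset.range k, f (ζ ^ j * u)‖ ≤ ∑ j ∈ Finset.range k, ‖f (ζ ^ j * u)‖ :=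
          norm_sum_le _ _
      _ < ∑ _j ∈ Finset.range k, (1:ℝ) :=
          Finset.sum_lt_sum_of_nonempty (by simp [Finset.nonempty_range_iff, hk0])
            fun j _ => hb _ (hju j)
      _ = k := by simp
  -- H 0 = f 0
  have hH0 : H 0 = f 0 := by
    have h1 : q 0 (fun _ => (0:ℂ)) = H 0 := hq.coeff_zero _
    rw [← h1, hqdef, ofScalars_apply_eq]
    rw [hA]
    simp [iteratedDeriv_zero]
  -- deriv H 0 = A k
  have hderivH : deriv H 0 = A k := by
    rw [hq.hasFPowerSeriesAt.deriv, hqdef]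
    have : (ofScalars ℂ (fun n => A (n * k))) 1 (fun _ => (1:ℂ)) = A (1 * k) := by
      rw [ofScalars_apply_eq]
      simp
    rw [this, one_mul]
  have hgoal : iteratedDeriv k f 0 / (Nat.factorial k : ℂ) = A k := rfl
  rw [hgoal, ← hderivH, ← hH0]
  exact schwarz_pick_zero H hdH hbH
end

section
/- Let f be analytic on the open unit disk with |f(z)| < 1 there, f(z) = ∑ aₙ zⁿ, and let m ≥ 1 be an integer. If r ∈ [0,1) satisfies (1 - r)(r²ᵐ + 2rᵐ - 1) + 2r²(1 + rᵐ)² ≤ 0, then for all z with |z| = r, |f(zᵐ)| + |z|ᵐ |f'(zᵐ)| + ∑_{k≥2} |aₖ| rᵏ ≤ 1. -/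
open Metric Complex Filter Topology

local notation "conj'" => starRingEnd ℂ

lemma bohr_denom_ne {a w : ℂ} (ha : ‖a‖ < 1) (hw : ‖w‖ < 1) :
    1 - conj' a * w ≠ 0 := by
  intro h
  have h1 : (1 : ℂ) = conj' a * w := by linear_combination h
  have : ‖conj' a * w‖ < 1 := by
    rw [norm_mul, RCLike.norm_conj]
    nlinarith [norm_nonneg a, norm_nonneg w]
  rw [← h1] at this
  simp at this

lemma bohr_normSq_key (a w : ℂ) :
    normSq (1 - conj' a * w) - normSq (w - a) = (1 - normSq a) * (1 - normSq w) := by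
  simp [Complex.normSq_apply, Complex.sub_re, Complex.sub_im, Complex.mul_re, Complex.mul_im,
    Complex.conj_re, Complex.conj_im, Complex.one_re, Complex.one_im]
  ring

lemma bohr_mobius_lt_one {a w : ℂ} (ha : ‖a‖ < 1) (hw : ‖w‖ < 1) :
    ‖(w - a) / (1 - conj' a * w)‖ < 1 := by
  rw [norm_div]
  have hne := bohr_denom_ne ha hw
  have hpos : 0 < ‖1 - conj' a * w‖ := norm_pos_iff.2 hne
  rw [div_lt_one hpos]
  have h1 : ‖w - a‖ ^ 2 < ‖1 - conj' a * w‖ ^ 2 := by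
    have := bohr_normSq_key a w
    have e1 : normSq (w - a) = ‖w - a‖ ^ 2 := by rw [normSq_eq_norm_sq]
    have e2 : normSq (1 - conj' a * w) = ‖1 - conj' a * w‖ ^ 2 := by
      rw [normSq_eq_norm_sq]
    have e3 : normSq a = ‖a‖ ^ 2 := by rw [normSq_eq_norm_sq]
    have e4 : normSq w = ‖w‖ ^ 2 := by rw [normSq_eq_norm_sq]
    rw [e1, e2, e3, e4] at this
    have p1 : (0:ℝ) < 1 - ‖a‖ ^ 2 := by nlinarith [norm_nonneg a]
    have p2 : (0:ℝ) < 1 - ‖w‖ ^ 2 := by nlinarith [norm_nonneg w]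
    nlinarith [mul_pos p1 p2]
  exact lt_of_pow_lt_pow_left₀ 2 (norm_nonneg _) h1

/-- Schwarz–Pick at the origin. -/
lemma bohr_schwarz_pick_zero (g : ℂ → ℂ) (hd : DifferentiableOn ℂ g (ball 0 1))
    (hb : ∀ z : ℂ, ‖z‖ < 1 → ‖g z‖ < 1) :
    ‖deriv g 0‖ ≤ 1 - ‖g 0‖ ^ 2 := by
  set a := g 0 with ha_def
  have ha : ‖a‖ < 1 := hb 0 (by simp)
  set G : ℂ → ℂ := fun z => (g z - a) / (1 - conj' a * g z) with hG
  have hmem : ∀ z : ℂ, ‖z‖ < 1 → ‖G z‖ < 1 := fun z hz => bohr_mobius_lt_one ha (hb z hz)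
  have hball : ∀ x : ℂ, x ∈ ball (0:ℂ) 1 → ‖x‖ < 1 := by
    intro x hx; simpa [mem_ball, dist_zero_right] using hx
  have hGd : DifferentiableOn ℂ G (ball 0 1) := by
    apply DifferentiableOn.div (hd.sub_const a)
    · exact (differentiableOn_const 1).sub ((differentiableOn_const _).mul hd)
    · intro x hx; exact bohr_denom_ne ha (hb x (hball x hx))
  have hG0 : G 0 = 0 := by simp [hG, ha_def]
  have hmaps : Set.MapsTo G (ball (0:ℂ) 1) (ball (G 0) 1) := by
    intro x hx
    rw [hG0, mem_ball, dist_zero_right]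
    exact hmem x (hball x hx)
  have hder : ‖deriv G 0‖ ≤ 1 := by
    simpa using Complex.norm_deriv_le_div_of_mapsTo_ball hGd (hmaps.mono_right ball_subset_closedBall) one_pos
  have hga : DifferentiableAt ℂ g 0 := hd.differentiableAt (isOpen_ball.mem_nhds (by simp))
  have h1 : HasDerivAt g (deriv g 0) 0 := hga.hasDerivAt
  have hnum : HasDerivAt (fun z => g z - a) (deriv g 0) 0 := h1.sub_const a
  have hden : HasDerivAt (fun z => 1 - conj' a * g z) (-(conj' a * deriv g 0)) 0 := by
    simpa using (h1.const_mul (conj' a)).const_sub 1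
  have hne : (1 - conj' a * g 0) ≠ 0 := bohr_denom_ne ha (by rw [← ha_def]; exact ha)
  have hGder : HasDerivAt G
      ((deriv g 0 * (1 - conj' a * g 0) - (g 0 - a) * (-(conj' a * deriv g 0)))
        / (1 - conj' a * g 0) ^ 2) 0 := hnum.div hden hne
  have hD : deriv G 0 = deriv g 0 / (1 - conj' a * a) := by
    rw [hGder.deriv, ← ha_def]
    have : g 0 - a = 0 := by rw [← ha_def]; ring
    have hne' : (1 - conj' a * a) ≠ 0 := bohr_denom_ne ha ha
    field_simp
    ring
  have hca : conj' a * a = (normSq a : ℂ) := by rw [mul_comm, mul_conj]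
  have hnormSq : normSq a = ‖a‖ ^ 2 := by rw [normSq_eq_norm_sq]
  have hlt : normSq a < 1 := by rw [hnormSq]; nlinarith [norm_nonneg a]
  have hnorm_denom : ‖1 - conj' a * a‖ = 1 - normSq a := by
    rw [hca]
    have : (1 : ℂ) - (normSq a : ℂ) = ((1 - normSq a : ℝ) : ℂ) := by push_cast; ring
    rw [this, Complex.norm_real, Real.norm_eq_abs, abs_of_pos (by linarith)]
  have hfinal : ‖deriv G 0‖ = ‖deriv g 0‖ / (1 - normSq a) := by
    rw [hD, norm_div, hnorm_denom]
  rw [hfinal, div_le_one (by linarith)] at hder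
  rw [← ha_def] at *
  calc ‖deriv g 0‖ ≤ 1 - normSq a := hder
    _ = 1 - ‖a‖ ^ 2 := by rw [hnormSq]

lemma bohr_denom_ne' {a w : ℂ} (ha : ‖a‖ < 1) (hw : ‖w‖ < 1) : 1 + conj' a * w ≠ 0 := by
  have := bohr_denom_ne (a := -a) (w := w) (by simpa) hw
  simpa [map_neg, neg_mul, sub_neg_eq_add] using this

lemma bohr_mobius_lt_one' {a w : ℂ} (ha : ‖a‖ < 1) (hw : ‖w‖ < 1) :
    ‖(w + a) / (1 + conj' a * w)‖ < 1 := by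
  have := bohr_mobius_lt_one (a := -a) (w := w) (by simpa) hw
  simpa [map_neg, neg_mul, sub_neg_eq_add] using this

lemma bohr_norm_one_sub_normSq {w : ℂ} (hw : ‖w‖ < 1) : ‖1 - conj' w * w‖ = 1 - ‖w‖ ^ 2 := by
  have hca : conj' w * w = (normSq w : ℂ) := by rw [mul_comm, mul_conj]
  have hnormSq : normSq w = ‖w‖ ^ 2 := by rw [normSq_eq_norm_sq]
  have h1 : (1 : ℂ) - (normSq w : ℂ) = ((1 - normSq w : ℝ) : ℂ) := by push_cast; ring
  rw [hca, h1, Complex.norm_real, Real.norm_eq_abs, abs_of_pos (by nlinarith [norm_nonneg w]),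
    hnormSq]

/-- Schwarz–Pick at a point. -/
lemma bohr_schwarz_pick (f : ℂ → ℂ) (hd : DifferentiableOn ℂ f (ball 0 1))
    (hb : ∀ z : ℂ, ‖z‖ < 1 → ‖f z‖ < 1) {w : ℂ} (hw : ‖w‖ < 1) :
    ‖deriv f w‖ * (1 - ‖w‖ ^ 2) ≤ 1 - ‖f w‖ ^ 2 := by
  set ψ : ℂ → ℂ := fun z => (z + w) / (1 + conj' w * z) with hψ
  have hψmem : ∀ z : ℂ, ‖z‖ < 1 → ‖ψ z‖ < 1 := fun z hz => bohr_mobius_lt_one' hw hz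
  have hψ0 : ψ 0 = w := by simp [hψ]
  have hψd : DifferentiableOn ℂ ψ (ball 0 1) := by
    apply DifferentiableOn.div
    · exact (differentiableOn_id).add_const w
    · exact (differentiableOn_const 1).add ((differentiableOn_const _).mul differentiableOn_id)
    · intro x hx
      exact bohr_denom_ne' hw (by simpa [mem_ball, dist_zero_right] using hx)
  set Ψ : ℂ → ℂ := fun z => f (ψ z) with hΨ
  have hΨd : DifferentiableOn ℂ Ψ (ball 0 1) := by
    apply hd.comp hψd
    intro x hx
    rw [mem_ball, dist_zero_right]
    exact hψmem x (by simpa [mem_ball, dist_zero_right] using hx)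
  have hΨb : ∀ z : ℂ, ‖z‖ < 1 → ‖Ψ z‖ < 1 := fun z hz => hb _ (hψmem z hz)
  have key := bohr_schwarz_pick_zero Ψ hΨd hΨb
  -- compute deriv ψ 0
  have hnum : HasDerivAt (fun z : ℂ => z + w) 1 0 := (hasDerivAt_id 0).add_const w
  have hden : HasDerivAt (fun z : ℂ => 1 + conj' w * z) (conj' w) 0 := by
    simpa using ((hasDerivAt_id 0).const_mul (conj' w)).const_add 1
  have hden0 : (1 + conj' w * (0:ℂ)) ≠ 0 := by simp
  have hψder : HasDerivAt ψ ((1 * (1 + conj' w * 0) - (0 + w) * conj' w) / (1 + conj' w * 0) ^ 2)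
      0 := hnum.div hden hden0
  have hψder' : HasDerivAt ψ (1 - w * conj' w) 0 := by
    convert hψder using 1
    simp
  have hfd : DifferentiableAt ℂ f w := hd.differentiableAt (isOpen_ball.mem_nhds (by
    simpa [mem_ball, dist_zero_right] using hw))
  have hfder : HasDerivAt f (deriv f w) (ψ 0) := by rw [hψ0]; exact hfd.hasDerivAt
  have hΨder : HasDerivAt Ψ (deriv f w * (1 - w * conj' w)) 0 := hfder.comp 0 hψder'
  have hΨ0 : Ψ 0 = f w := by rw [hΨ]; simp only; rw [hψ0]
  rw [hΨder.deriv, hΨ0] at key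
  have hn : ‖1 - w * conj' w‖ = 1 - ‖w‖ ^ 2 := by
    rw [mul_comm]; exact bohr_norm_one_sub_normSq hw
  rw [norm_mul, hn] at key
  exact key

/-- Quantitative Möbius bound. -/
lemma bohr_mobius_norm_bound {A t : ℂ} (hA : ‖A‖ < 1) (ht : ‖t‖ < 1) :
    ‖t + A‖ * (1 + ‖A‖ * ‖t‖) ≤ (‖t‖ + ‖A‖) * ‖1 + conj' A * t‖ := by
  have hc0 : (0:ℝ) ≤ ‖A‖ := norm_nonneg A
  have hx0 : (0:ℝ) ≤ ‖t‖ := norm_nonneg t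
  set s : ℝ := (t * conj' A).re with hs_def
  have hs : |s| ≤ ‖t‖ * ‖A‖ := by
    calc |s| ≤ ‖t * conj' A‖ := Complex.abs_re_le_norm _
      _ = ‖t‖ * ‖A‖ := by rw [norm_mul, RCLike.norm_conj]
  have sqnorm : ∀ z : ℂ, ‖z‖ ^ 2 = normSq z := fun z => by
    rw [Complex.sq_norm]
  have n1 : ‖t + A‖ ^ 2 = ‖t‖ ^ 2 + ‖A‖ ^ 2 + 2 * s := by
    rw [sqnorm, sqnorm, sqnorm, normSq_add]
  have n2 : ‖1 + conj' A * t‖ ^ 2 = 1 + ‖A‖ ^ 2 * ‖t‖ ^ 2 + 2 * s := by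
    rw [sqnorm, normSq_add]
    have e2 : normSq (conj' A * t) = ‖A‖ ^ 2 * ‖t‖ ^ 2 := by
      rw [normSq_mul, normSq_conj, sqnorm, sqnorm]
    have e3 : (1 * conj' (conj' A * t)).re = s := by
      simp [hs_def, Complex.mul_re, Complex.conj_re, Complex.conj_im]
      ring
    rw [e2, e3, normSq_one]
  -- squared inequality
  have hsq : (‖t + A‖ * (1 + ‖A‖ * ‖t‖)) ^ 2 ≤ ((‖t‖ + ‖A‖) * ‖1 + conj' A * t‖) ^ 2 := by
    have hs' : s ≤ ‖t‖ * ‖A‖ := le_trans (le_abs_self s) hs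
    have hprod : 0 ≤ (‖t‖ * ‖A‖ - s) * ((1 - ‖A‖ ^ 2) * (1 - ‖t‖ ^ 2)) := by
      apply mul_nonneg (by linarith)
      apply mul_nonneg <;> nlinarith
    calc (‖t + A‖ * (1 + ‖A‖ * ‖t‖)) ^ 2 = ‖t + A‖ ^ 2 * (1 + ‖A‖ * ‖t‖) ^ 2 := by ring
      _ = (‖t‖ ^ 2 + ‖A‖ ^ 2 + 2 * s) * (1 + ‖A‖ * ‖t‖) ^ 2 := by rw [n1]
      _ ≤ (‖t‖ + ‖A‖) ^ 2 * (1 + ‖A‖ ^ 2 * ‖t‖ ^ 2 + 2 * s) := by nlinarith [hprod]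
      _ = (‖t‖ + ‖A‖) ^ 2 * ‖1 + conj' A * t‖ ^ 2 := by rw [n2]
      _ = ((‖t‖ + ‖A‖) * ‖1 + conj' A * t‖) ^ 2 := by ring
  have hR : (0:ℝ) ≤ (‖t‖ + ‖A‖) * ‖1 + conj' A * t‖ :=
    mul_nonneg (by linarith) (norm_nonneg _)
  exact le_of_pow_le_pow_left₀ two_ne_zero hR hsq

/-- Growth bound: `‖f w‖ (1 + cρ) ≤ c + ρ` where `c = ‖f 0‖`, `ρ ≥ ‖w‖`. -/
lemma bohr_growth (f : ℂ → ℂ) (hd : DifferentiableOn ℂ f (ball 0 1))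
    (hb : ∀ z : ℂ, ‖z‖ < 1 → ‖f z‖ < 1) {w : ℂ} (hw : ‖w‖ < 1) {ρ : ℝ}
    (hρ : ‖w‖ ≤ ρ) (hρ1 : ρ < 1) :
    ‖f w‖ * (1 + ‖f 0‖ * ρ) ≤ ‖f 0‖ + ρ := by
  set A := f 0 with hA_def
  have hA : ‖A‖ < 1 := hb 0 (by simp)
  set G : ℂ → ℂ := fun z => (f z - A) / (1 - conj' A * f z) with hG
  have hball : ∀ x : ℂ, x ∈ ball (0:ℂ) 1 → ‖x‖ < 1 := by
    intro x hx; simpa [mem_ball, dist_zero_right] using hx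
  have hGd : DifferentiableOn ℂ G (ball 0 1) := by
    apply DifferentiableOn.div (hd.sub_const A)
    · exact (differentiableOn_const 1).sub ((differentiableOn_const _).mul hd)
    · intro x hx; exact bohr_denom_ne hA (hb x (hball x hx))
  have hG0 : G 0 = 0 := by simp [hG, hA_def]
  have hmaps : Set.MapsTo G (ball (0:ℂ) 1) (ball (0:ℂ) 1) := by
    intro x hx
    rw [mem_ball, dist_zero_right]
    exact bohr_mobius_lt_one hA (hb x (hball x hx))
  have hSch : ‖G w‖ ≤ ‖w‖ := by
    have := Complex.norm_le_norm_of_mapsTo_ball (z := w) hGd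
      (hmaps.mono_right ball_subset_closedBall) hG0 hw
    exact this
  set t := G w with ht_def
  have ht1 : ‖t‖ < 1 := lt_of_le_of_lt hSch hw
  have hfw : ‖f w‖ < 1 := hb w hw
  have hden : (1 - conj' A * f w) ≠ 0 := bohr_denom_ne hA hfw
  have ht2 : t * (1 - conj' A * f w) = f w - A := by
    rw [ht_def, hG]
    exact div_mul_cancel₀ _ hden
  have key : t + A = f w * (1 + conj' A * t) := by linear_combination ht2
  have hnorm : ‖t + A‖ = ‖f w‖ * ‖1 + conj' A * t‖ := by rw [key, norm_mul]
  have hq := bohr_mobius_norm_bound hA ht1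
  rw [hnorm] at hq
  have hposd : (0:ℝ) < ‖1 + conj' A * t‖ := norm_pos_iff.2 (bohr_denom_ne' hA ht1)
  -- cancel ‖1 + conj' A * t‖
  have hx : ‖f w‖ * (1 + ‖A‖ * ‖t‖) ≤ ‖t‖ + ‖A‖ := by
    have h2 : ‖f w‖ * ‖1 + conj' A * t‖ * (1 + ‖A‖ * ‖t‖)
        = (‖f w‖ * (1 + ‖A‖ * ‖t‖)) * ‖1 + conj' A * t‖ := by ring
    rw [h2] at hq
    exact le_of_mul_le_mul_right hq hposd
  -- monotone step from ‖t‖ to ρ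
  have hc0 : (0:ℝ) ≤ ‖A‖ := norm_nonneg A
  have hf0 : (0:ℝ) ≤ ‖f w‖ := norm_nonneg _
  have htρ : ‖t‖ ≤ ρ := le_trans hSch hρ
  nlinarith [mul_nonneg (sub_nonneg.2 htρ) (show (0:ℝ) ≤ 1 - ‖f w‖ * ‖A‖ by nlinarith),
    norm_nonneg t]

lemma bohr_coeff_eq {f : ℂ → ℂ} {p : FormalMultilinearSeries ℂ ℂ ℂ} {r : ENNReal}
    (hp : HasFPowerSeriesOnBall f p 0 r) (n : ℕ) :
    p.coeff n = iteratedDeriv n f 0 / (n.factorial : ℂ) := by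
  have h := hp.factorial_smul (1 : ℂ) n
  rw [iteratedDeriv_eq_iteratedFDeriv]
  have h2 : (n.factorial : ℂ) * p.coeff n = iteratedFDeriv ℂ n f 0 fun _ => 1 := by
    rw [← h, FormalMultilinearSeries.apply_eq_pow_smul_coeff, nsmul_eq_mul]
    simp
  rw [← h2]
  have : (n.factorial : ℂ) ≠ 0 := Nat.cast_ne_zero.2 n.factorial_ne_zero
  field_simp

lemma bohr_rep {f : ℂ → ℂ} (hd : DifferentiableOn ℂ f (ball 0 1)) {z : ℂ} (hz : ‖z‖ < 1) :
    HasSum (fun k => iteratedDeriv k f 0 / (k.factorial : ℂ) * z ^ k) (f z) := by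
  set s : ℝ := (1 + ‖z‖) / 2 with hs_def
  have hz0 := norm_nonneg z
  have hs0 : 0 < s := by positivity
  have hs1 : s < 1 := by rw [hs_def]; linarith
  have hzs : ‖z‖ < s := by rw [hs_def]; linarith
  set s' : NNReal := ⟨s, hs0.le⟩ with hs'_def
  have hcoe : (s' : ℝ) = s := rfl
  have hsub : closedBall (0:ℂ) s' ⊆ ball (0:ℂ) 1 := by
    rw [hcoe]
    exact closedBall_subset_ball hs1
  have hfd : DifferentiableOn ℂ f (closedBall 0 s') := hd.mono hsub
  have hps := hfd.hasFPowerSeriesOnBall (by exact_mod_cast hs0)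
  have hzmem : z ∈ Metric.eball (0:ℂ) s' := by
    rw [Metric.eball_coe]
    exact mem_ball_zero_iff.2 (by rw [hcoe]; exact hzs)
  have h := hps.hasSum hzmem
  rw [zero_add] at h
  have e : ∀ k, (cauchyPowerSeries f 0 (s' : ℝ) k fun _ => z)
      = iteratedDeriv k f 0 / (k.factorial : ℂ) * z ^ k := by
    intro k
    rw [FormalMultilinearSeries.apply_eq_pow_smul_coeff, bohr_coeff_eq hps k, smul_eq_mul]
    ring
  simpa only [e] using h

lemma bohr_coeff_le_one {f : ℂ → ℂ} (hd : DifferentiableOn ℂ f (ball 0 1))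
    (hb : ∀ z : ℂ, ‖z‖ < 1 → ‖f z‖ < 1) (k : ℕ) :
    ‖iteratedDeriv k f 0 / (k.factorial : ℂ)‖ ≤ 1 := by
  set C : ℝ := ‖iteratedDeriv k f 0 / (k.factorial : ℂ)‖ with hC_def
  have key : ∀ s : ℝ, 0 < s → s < 1 → C * s ^ k ≤ 1 := by
    intro s hs0 hs1
    set s' : NNReal := ⟨s, hs0.le⟩ with hs'_def
    have hcoe : (s' : ℝ) = s := rfl
    have hsub : closedBall (0:ℂ) s' ⊆ ball (0:ℂ) 1 := by
      rw [hcoe]; exact closedBall_subset_ball hs1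
    have hfd : DifferentiableOn ℂ f (closedBall 0 s') := hd.mono hsub
    have hps := hfd.hasFPowerSeriesOnBall (by exact_mod_cast hs0)
    have hc : (cauchyPowerSeries f 0 s').coeff k = iteratedDeriv k f 0 / (k.factorial : ℂ) :=
      bohr_coeff_eq hps k
    have hnc : ‖cauchyPowerSeries f 0 s' k‖ = C := by
      rw [FormalMultilinearSeries.norm_apply_eq_norm_coef, hc]
    have hbound := norm_cauchyPowerSeries_le f 0 (s' : ℝ) k
    -- bound the integral
    have hcm : ∀ θ : ℝ, circleMap 0 s θ ∈ ball (0:ℂ) 1 := by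
      intro θ
      rw [mem_ball_zero_iff, norm_circleMap_zero, abs_of_pos hs0]
      exact hs1
    have hcont : Continuous fun θ : ℝ => ‖f (circleMap 0 s θ)‖ :=
      (hd.continuousOn.comp_continuous (continuous_circleMap 0 s) hcm).norm
    have hint : (∫ θ : ℝ in (0)..2 * Real.pi, ‖f (circleMap 0 (s' : ℝ) θ)‖) ≤ 2 * Real.pi := by
      rw [hcoe]
      calc (∫ θ : ℝ in (0)..2 * Real.pi, ‖f (circleMap 0 s θ)‖)
          ≤ ∫ _ : ℝ in (0)..2 * Real.pi, (1:ℝ) := by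
            apply intervalIntegral.integral_mono_on Real.two_pi_pos.le
              (hcont.intervalIntegrable 0 (2 * Real.pi)) intervalIntegrable_const
            intro x _
            exact (hb _ (by simpa [mem_ball_zero_iff] using hcm x)).le
        _ = 2 * Real.pi := by simp
    have h2pi : (0:ℝ) < (2 * Real.pi)⁻¹ := by positivity
    have hbound2 : ‖cauchyPowerSeries f 0 (s' : ℝ) k‖ ≤ |(s' : ℝ)|⁻¹ ^ k := by
      refine hbound.trans ?_
      have : (2 * Real.pi)⁻¹ * (∫ θ : ℝ in (0)..2 * Real.pi, ‖f (circleMap 0 (s' : ℝ) θ)‖) ≤ 1 := by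
        rw [← inv_mul_cancel₀ (ne_of_gt Real.two_pi_pos)]
        exact mul_le_mul_of_nonneg_left hint h2pi.le
      have hp : (0:ℝ) ≤ |(s' : ℝ)|⁻¹ ^ k := by positivity
      nlinarith [this, hp]
    rw [hnc] at hbound2
    have habs : |(s' : ℝ)| = s := by rw [hcoe, abs_of_pos hs0]
    rw [habs] at hbound2
    calc C * s ^ k ≤ s⁻¹ ^ k * s ^ k := by
          apply mul_le_mul_of_nonneg_right hbound2 (by positivity)
      _ = 1 := by
          rw [← mul_pow, inv_mul_cancel₀ hs0.ne', one_pow]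
  -- take the limit s → 1⁻
  have htend : Tendsto (fun s : ℝ => C * s ^ k) (nhdsWithin 1 (Set.Iio 1)) (𝓝 (C * 1 ^ k)) :=
    ((continuous_const.mul (continuous_pow k)).tendsto 1).mono_left nhdsWithin_le_nhds
  have hev : ∀ᶠ s : ℝ in nhdsWithin 1 (Set.Iio 1), C * s ^ k ≤ 1 := by
    filter_upwards [Ioo_mem_nhdsLT_of_mem (Set.mem_Ioc.2 ⟨zero_lt_one, le_refl (1:ℝ)⟩)]
      with s hs
    exact key s hs.1 hs.2
  have := le_of_tendsto htend hev
  simpa using this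

/-- Wiener's inequality: `‖a_n‖ ≤ 1 - ‖a_0‖²` for `n ≥ 1`. -/
lemma bohr_wiener (f : ℂ → ℂ) (hd : DifferentiableOn ℂ f (ball 0 1))
    (hb : ∀ z : ℂ, ‖z‖ < 1 → ‖f z‖ < 1) (n : ℕ) (hn : 1 ≤ n) :
    ‖iteratedDeriv n f 0 / (n.factorial : ℂ)‖ ≤ 1 - ‖f 0‖ ^ 2 := by
  have hn0 : n ≠ 0 := by omega
  set a : ℕ → ℂ := fun k => iteratedDeriv k f 0 / (k.factorial : ℂ) with ha_def
  set ω : ℂ := Complex.exp (2 * Real.pi * I / n) with hω_def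
  have hω : IsPrimitiveRoot ω n := Complex.isPrimitiveRoot_exp n hn0
  have hωn : ∀ j : ℕ, ‖ω ^ j‖ = 1 := by
    intro j
    rw [norm_pow]
    have : ‖ω‖ = 1 := by
      rw [hω_def, Complex.norm_exp]
      have : (2 * Real.pi * I / n).re = 0 := by
        simp [Complex.div_re]
      rw [this, Real.exp_zero]
    rw [this, one_pow]
  -- the symmetrized-coefficient series
  set q : FormalMultilinearSeries ℂ ℂ ℂ :=
    FormalMultilinearSeries.ofScalars ℂ (fun k => a (n * k)) with hq_def
  have hb1 : ∀ k, ‖a k‖ ≤ 1 := fun k => bohr_coeff_le_one hd hb k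
  have hqnorm : ∀ k, ‖q k‖ = ‖a (n * k)‖ := fun k => by
    rw [hq_def, FormalMultilinearSeries.ofScalars_norm]
  have hqcoeff : ∀ k, q.coeff k = a (n * k) := by
    intro k
    have : q.coeff k = q k (fun _ => 1) := rfl
    rw [this, hq_def, FormalMultilinearSeries.ofScalars_apply_eq]
    simp
  have hrad : 1 ≤ q.radius := by
    have h1 : ((1 : NNReal) : ENNReal) ≤ q.radius := by
      apply q.le_radius_of_bound 1
      intro k
      rw [hqnorm]
      simpa using hb1 (n * k)
    simpa using h1
  set h : ℂ → ℂ := q.sum with hh_def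
  have hq : HasFPowerSeriesOnBall h q 0 1 :=
    (q.hasFPowerSeriesOnBall (lt_of_lt_of_le zero_lt_one hrad)).mono zero_lt_one hrad
  have hball1 : Metric.eball (0:ℂ) 1 = ball (0:ℂ) 1 := by
    have := Metric.eball_coe (x := (0:ℂ)) (ε := 1)
    simpa using this
  -- key identity
  have key : ∀ z : ℂ, ‖z‖ < 1 → (n : ℂ) * h (z ^ n) = ∑ j ∈ Finset.range n, f (ω ^ j * z) := by
    intro z hz
    have hzn : ‖z ^ n‖ < 1 := by
      rw [norm_pow]
      exact pow_lt_one₀ (norm_nonneg z) hz hn0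
    have hmem : z ^ n ∈ Metric.eball (0:ℂ) 1 := by rw [hball1]; exact mem_ball_zero_iff.2 hzn
    have h1 := hq.hasSum hmem
    rw [zero_add] at h1
    have h2 : HasSum (fun k => a (n * k) * z ^ (n * k)) (h (z ^ n)) := by
      have e : ∀ k, (q k fun _ => z ^ n) = a (n * k) * z ^ (n * k) := by
        intro k
        rw [FormalMultilinearSeries.apply_eq_pow_smul_coeff, hqcoeff k, smul_eq_mul, pow_mul]
        ring
      simpa only [e] using h1
    set g : ℕ → ℂ := fun k => (if n ∣ k then a k else 0) * z ^ k with hg_def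
    have h3 : HasSum g (h (z ^ n)) := by
      have hinj : Function.Injective (fun k : ℕ => n * k) := fun x y hxy => by
        simpa [hn0] using hxy
      rw [← Function.Injective.hasSum_iff hinj]
      · convert h2 using 1
        funext k
        simp only [Function.comp, hg_def]
        rw [if_pos ⟨k, rfl⟩]
      · intro x hx
        have : ¬ n ∣ x := by
          rintro ⟨c, rfl⟩
          exact hx ⟨c, rfl⟩
        rw [hg_def]
        simp [this]
    have hroot_sum : ∀ k : ℕ, ∑ j ∈ Finset.range n, (ω ^ k) ^ j
        = if n ∣ k then (n : ℂ) else 0 := by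
      intro k
      by_cases hdvd : n ∣ k
      · rw [if_pos hdvd]
        have : ω ^ k = 1 := (hω.pow_eq_one_iff_dvd k).2 hdvd
        simp [this]
      · rw [if_neg hdvd]
        have hne : ω ^ k ≠ 1 := fun hc => hdvd ((hω.pow_eq_one_iff_dvd k).1 hc)
        rw [geom_sum_eq hne]
        have : (ω ^ k) ^ n = 1 := by
          rw [← pow_mul, mul_comm, pow_mul, hω.pow_eq_one, one_pow]
        rw [this]
        simp
    have h4 : HasSum (fun k => ∑ j ∈ Finset.range n, a k * (ω ^ j * z) ^ k)
        (∑ j ∈ Finset.range n, f (ω ^ j * z)) := by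
      apply hasSum_sum
      intro j _
      apply bohr_rep hd
      rw [norm_mul, hωn j, one_mul]
      exact hz
    have h5 : HasSum (fun k => (n : ℂ) * g k) (∑ j ∈ Finset.range n, f (ω ^ j * z)) := by
      convert h4 using 1
      funext k
      rw [hg_def]
      simp only
      have : ∀ j, a k * (ω ^ j * z) ^ k = a k * z ^ k * (ω ^ k) ^ j := by
        intro j
        rw [mul_pow, ← pow_mul, mul_comm j k, pow_mul]
        ring
      rw [Finset.sum_congr rfl (fun j _ => this j), ← Finset.mul_sum, hroot_sum k]
      by_cases hdvd : n ∣ k <;> simp [hdvd] <;> ring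
    exact (h3.mul_left (n:ℂ)).unique h5
  -- h maps the disk into the disk
  have hhb : ∀ w : ℂ, ‖w‖ < 1 → ‖h w‖ < 1 := by
    intro w hw
    obtain ⟨z, hzw⟩ := IsAlgClosed.exists_pow_nat_eq w (Nat.pos_of_ne_zero hn0)
    have hz : ‖z‖ < 1 := by
      have : ‖z‖ ^ n < 1 := by rw [← norm_pow, hzw]; exact hw
      by_contra hcon
      push_neg at hcon
      exact absurd this (not_lt.2 (one_le_pow₀ hcon))
    have hk := key z hz
    rw [hzw] at hk
    have hnpos : (0:ℝ) < n := by exact_mod_cast Nat.pos_of_ne_zero hn0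
    have : (n:ℝ) * ‖h w‖ = ‖(n:ℂ) * h w‖ := by
      rw [norm_mul]
      simp
    have hlt : ‖(n:ℂ) * h w‖ < n := by
      rw [hk]
      calc ‖∑ j ∈ Finset.range n, f (ω ^ j * z)‖ ≤ ∑ j ∈ Finset.range n, ‖f (ω ^ j * z)‖ :=
            norm_sum_le _ _
        _ < ∑ _j ∈ Finset.range n, (1:ℝ) := by
            apply Finset.sum_lt_sum_of_nonempty
            · exact Finset.nonempty_range_iff.2 hn0
            · intro j _
              apply hb
              rw [norm_mul, hωn j, one_mul]
              exact hz
        _ = n := by simp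
    nlinarith [this ▸ hlt]
  have hhd : DifferentiableOn ℂ h (ball 0 1) := by
    have := hq.differentiableOn
    rwa [hball1] at this
  have hmain := bohr_schwarz_pick_zero h hhd hhb
  have hder : deriv h 0 = a n := by
    rw [hq.hasFPowerSeriesAt.deriv]
    have : (q 1) (fun _ => (1:ℂ)) = q.coeff 1 := rfl
    rw [this, hqcoeff, mul_one]
  have hzero : h 0 = a 0 := by
    have := hq.hasFPowerSeriesAt.coeff_zero (fun _ => (1:ℂ))
    rw [← this]
    have : (q 0) (fun _ => (1:ℂ)) = q.coeff 0 := rfl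
    rw [this, hqcoeff, mul_zero]
  have ha0 : a 0 = f 0 := by
    rw [ha_def]
    simp
  rw [hder, hzero, ha0] at hmain
  exact hmain

set_option maxHeartbeats 1000000 in
lemma bohr_final {r ρ aa c fd S : ℝ} (hr0 : 0 ≤ r) (hr1 : r < 1) (hρ0 : 0 ≤ ρ) (hρ1 : ρ < 1)
    (ha0 : 0 ≤ aa) (hc0 : 0 ≤ c) (hc1 : c < 1) (hfd0 : 0 ≤ fd)
    (hA : aa * (1 + c * ρ) ≤ c + ρ) (hfd : fd * (1 - ρ ^ 2) ≤ 1 - aa ^ 2)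
    (hS0 : 0 ≤ S) (hS : S ≤ (1 - c ^ 2) * (r ^ 2 / (1 - r)))
    (hroot : (1 - r) * (ρ ^ 2 + 2 * ρ - 1) + 2 * r ^ 2 * (1 + ρ) ^ 2 ≤ 0) :
    aa + ρ * fd + S ≤ 1 := by
  have h1r : (0:ℝ) < 1 - r := by linarith
  have hρ1' : (0:ℝ) < 1 - ρ := by linarith
  have hρ1'' : (0:ℝ) < 1 + ρ := by linarith
  have h1ρ2 : (0:ℝ) < 1 - ρ ^ 2 := by nlinarith [mul_pos hρ1' hρ1'']
  have hcρ : (0:ℝ) < 1 + c * ρ := by nlinarith [mul_nonneg hc0 hρ0]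
  have hc1' : (0:ℝ) ≤ 1 - c := by linarith
  have haa1 : aa ≤ 1 := by
    nlinarith [mul_nonneg hc1' hρ1'.le]
  have hK : 2 * ρ ≤ 1 - ρ ^ 2 := by
    nlinarith [mul_nonneg (mul_nonneg hr0 hr0) (sq_nonneg (1 + ρ))]
  have t1 : (0:ℝ) ≤ r ^ 2 * ((1 + ρ) ^ 2 - (1 + c * ρ) ^ 2) := by
    apply mul_nonneg (sq_nonneg r)
    have haux : (0:ℝ) ≤ 2 + ρ + c * ρ := by nlinarith [mul_nonneg hc0 hρ0]
    nlinarith [mul_nonneg (mul_nonneg hc1' hρ0) haux]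
  have t2 : (0:ℝ) ≤ (1 - c) * r ^ 2 * (1 + c * ρ) ^ 2 :=
    mul_nonneg (mul_nonneg (by linarith) (sq_nonneg r)) (sq_nonneg _)
  have t3 : (0:ℝ) ≤ (1 - r) * ρ ^ 2 * (1 - c) :=
    mul_nonneg (mul_nonneg h1r.le (sq_nonneg ρ)) (by linarith)
  have hΨ : (1 + c) * r ^ 2 * (1 + c * ρ) ^ 2 ≤ (1 - r) * (1 - 2 * ρ - c * ρ ^ 2) := by
    linarith [hroot, t1, t2, t3]
  have hD : 0 ≤ (c + ρ) - aa * (1 + c * ρ) := by linarith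
  have hB : (0:ℝ) ≤ 1 - 2 * ρ - c * ρ ^ 2 := by
    nlinarith [mul_nonneg hc1' (sq_nonneg ρ)]
  have hEρ : (0:ℝ) ≤ (1 - c) * (1 - ρ) * (1 + ρ) := by
    apply mul_nonneg (mul_nonneg (by linarith) (by linarith)) (by linarith)
  have e1 : (0:ℝ) ≤ (1 - c) * (1 - ρ) * (1 - r) * (1 - 2 * ρ - c * ρ ^ 2) * (1 + ρ)
      - (1 - c ^ 2) * r ^ 2 * (1 - ρ ^ 2) * (1 + c * ρ) ^ 2 := by
    have h := mul_le_mul_of_nonneg_left hΨ hEρ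
    linarith [h]
  have e2 : (0:ℝ) ≤ ((c + ρ) - aa * (1 + c * ρ)) * (1 - r) * (1 - 2 * ρ - c * ρ ^ 2)
      * (1 + ρ) :=
    mul_nonneg (mul_nonneg (mul_nonneg hD h1r.le) hB) (by linarith)
  have e3 : (0:ℝ) ≤ ((1 - c) * (1 - ρ) + ((c + ρ) - aa * (1 + c * ρ))) * (1 - r) * ρ
      * ((c + ρ) - aa * (1 + c * ρ)) := by
    apply mul_nonneg (mul_nonneg (mul_nonneg ?_ h1r.le) hρ0) hD
    have : (0:ℝ) ≤ (1 - c) * (1 - ρ) :=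
      mul_nonneg (by linarith) (by linarith)
    linarith
  have hpoly : (0:ℝ) ≤ ((1 - aa) * (1 - ρ ^ 2) * (1 - r) - ρ * (1 - aa ^ 2) * (1 - r)
      - (1 - c ^ 2) * r ^ 2 * (1 - ρ ^ 2)) * (1 + c * ρ) ^ 2 := by
    linarith [e1, e2, e3]
  have hcρ2 : (0:ℝ) < (1 + c * ρ) ^ 2 := by positivity
  have hpoly2 : (0:ℝ) ≤ (1 - aa) * (1 - ρ ^ 2) * (1 - r) - ρ * (1 - aa ^ 2) * (1 - r)
      - (1 - c ^ 2) * r ^ 2 * (1 - ρ ^ 2) :=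
    (mul_nonneg_iff_of_pos_right hcρ2).mp hpoly
  have hfd2 : ρ * fd ≤ ρ * ((1 - aa ^ 2) / (1 - ρ ^ 2)) := by
    apply mul_le_mul_of_nonneg_left _ hρ0
    rw [le_div_iff₀ h1ρ2]
    exact hfd
  have hsuff : ρ * ((1 - aa ^ 2) / (1 - ρ ^ 2)) + (1 - c ^ 2) * (r ^ 2 / (1 - r)) ≤ 1 - aa := by
    have lhs_eq : ρ * ((1 - aa ^ 2) / (1 - ρ ^ 2)) + (1 - c ^ 2) * (r ^ 2 / (1 - r))
        = (ρ * (1 - aa ^ 2) * (1 - r) + (1 - c ^ 2) * r ^ 2 * (1 - ρ ^ 2))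
          / ((1 - ρ ^ 2) * (1 - r)) := by
      field_simp
    rw [lhs_eq, div_le_iff₀ (mul_pos h1ρ2 h1r)]
    linarith [hpoly2]
  linarith [hfd2, hS, hsuff]

/-- Theorem 2 (sufficiency): improved Bohr inequality with `|f(zᵐ)| + |z|ᵐ|f'(zᵐ)|`. -/
theorem bohr_improved_one (f : ℂ → ℂ)
    (hd : DifferentiableOn ℂ f (Metric.ball (0 : ℂ) 1))
    (hb : ∀ z : ℂ, ‖z‖ < 1 → ‖f z‖ < 1)
    (m : ℕ) (hm : 1 ≤ m) (r : ℝ) (hr : r ∈ Set.Ico (0 : ℝ) 1)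
    (hroot : (1 - r) * (r ^ (2 * m) + 2 * r ^ m - 1) + 2 * r ^ 2 * (1 + r ^ m) ^ 2 ≤ 0) :
    ∀ z : ℂ, ‖z‖ = r →
      ‖f (z ^ m)‖ + ‖z‖ ^ m * ‖deriv f (z ^ m)‖ +
        ∑' k : ℕ, ‖iteratedDeriv (k + 2) f 0 / (Nat.factorial (k + 2) : ℂ)‖ * r ^ (k + 2)
        ≤ 1 := by
  intro z hz
  obtain ⟨hr0, hr1⟩ := hr
  have hm0 : m ≠ 0 := by omega
  set ρ : ℝ := r ^ m with hρ_def
  have hρ0 : 0 ≤ ρ := pow_nonneg hr0 m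
  have hρ1 : ρ < 1 := pow_lt_one₀ hr0 hr1 hm0
  set w : ℂ := z ^ m with hw_def
  have hwn : ‖w‖ = ρ := by rw [hw_def, norm_pow, hz]
  have hw1 : ‖w‖ < 1 := by rw [hwn]; exact hρ1
  set c : ℝ := ‖f 0‖ with hc_def
  have hc1 : c < 1 := hb 0 (by simp)
  have hc0 : 0 ≤ c := norm_nonneg _
  set aa : ℝ := ‖f w‖ with haa_def
  have ha0 : 0 ≤ aa := norm_nonneg _
  have hA : aa * (1 + c * ρ) ≤ c + ρ := bohr_growth f hd hb hw1 (le_of_eq hwn) hρ1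
  have hfd : ‖deriv f w‖ * (1 - ρ ^ 2) ≤ 1 - aa ^ 2 := by
    have := bohr_schwarz_pick f hd hb hw1
    rwa [hwn] at this
  -- the tail sum
  set S : ℝ := ∑' k : ℕ, ‖iteratedDeriv (k + 2) f 0 / (Nat.factorial (k + 2) : ℂ)‖ * r ^ (k + 2)
    with hS_def
  have hgeom : Summable (fun k : ℕ => r ^ (k + 2)) := by
    have h := (summable_geometric_of_lt_one hr0 hr1).mul_right (r ^ 2)
    simpa [pow_add] using h
  have hterm : ∀ k : ℕ, ‖iteratedDeriv (k + 2) f 0 / (Nat.factorial (k + 2) : ℂ)‖ * r ^ (k + 2)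
      ≤ (1 - c ^ 2) * r ^ (k + 2) := fun k =>
    mul_le_mul_of_nonneg_right (bohr_wiener f hd hb (k + 2) (by omega)) (pow_nonneg hr0 _)
  have hsummR : Summable (fun k : ℕ => (1 - c ^ 2) * r ^ (k + 2)) := hgeom.mul_left _
  have hsummL : Summable (fun k : ℕ =>
      ‖iteratedDeriv (k + 2) f 0 / (Nat.factorial (k + 2) : ℂ)‖ * r ^ (k + 2)) := by
    apply Summable.of_nonneg_of_le _ hterm hsummR
    intro k
    exact mul_nonneg (norm_nonneg _) (pow_nonneg hr0 _)
  have hS0 : 0 ≤ S := tsum_nonneg fun k => mul_nonneg (norm_nonneg _) (pow_nonneg hr0 _)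
  have hS : S ≤ (1 - c ^ 2) * (r ^ 2 / (1 - r)) := by
    have h1 : S ≤ ∑' k : ℕ, (1 - c ^ 2) * r ^ (k + 2) := Summable.tsum_le_tsum hterm hsummL hsummR
    have h2 : ∑' k : ℕ, (1 - c ^ 2) * r ^ (k + 2) = (1 - c ^ 2) * (r ^ 2 / (1 - r)) := by
      rw [tsum_mul_left]
      congr 1
      have h3 : ∀ k : ℕ, r ^ (k + 2) = r ^ k * r ^ 2 := fun k => by rw [pow_add]
      rw [tsum_congr h3, tsum_mul_right, tsum_geometric_of_lt_one hr0 hr1]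
      rw [div_eq_mul_inv, mul_comm]
    rw [h2] at h1
    exact h1
  have hzr : ‖z‖ ^ m = ρ := by rw [hz]
  rw [hzr]
  have hroot' : (1 - r) * (ρ ^ 2 + 2 * ρ - 1) + 2 * r ^ 2 * (1 + ρ) ^ 2 ≤ 0 := by
    have : ρ ^ 2 = r ^ (2 * m) := by rw [hρ_def, ← pow_mul, mul_comm]
    rw [this]
    exact hroot
  exact bohr_final hr0 hr1 hρ0 hρ1 ha0 hc0 hc1 (norm_nonneg _) hA hfd hS0 hS hroot'
end

section
/- Let f be analytic on the open unit disk with |f(z)| < 1 there, f(z) = ∑ aₙ zⁿ, and let m ≥ 1 be an integer. If r ∈ [0,1) satisfies 3r - 1 + rᵐ(2r²(rᵐ + 2) + rᵐ(1 - r)) ≤ 0, then for all z with |z| = r, |f(zᵐ)| + |z| |f'(zᵐ)| + ∑_{k≥2} |aₖ| rᵏ ≤ 1. -/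
open Metric Complex Set Filter Function
open scoped Topology NNReal

set_option maxHeartbeats 1000000
/-- Cauchy estimate: coefficients of a function bounded by 1 on unit disk are ≤ 1. -/
lemma coeff_norm_le_one {F : ℂ → ℂ} {q : FormalMultilinearSeries ℂ ℂ ℂ}
    (hdF : DifferentiableOn ℂ F (ball (0:ℂ) 1))
    (hbF : ∀ z : ℂ, ‖z‖ < 1 → ‖F z‖ ≤ 1)
    (hq : HasFPowerSeriesAt F q 0) (n : ℕ) : ‖q.coeff n‖ ≤ 1 := by
  have key : ∀ ρ : ℝ≥0, 0 < ρ → (ρ : ℝ) < 1 → ‖q.coeff n‖ ≤ (ρ : ℝ)⁻¹ ^ n := by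
    intro ρ h0 h1
    have hsub : closedBall (0:ℂ) ρ ⊆ ball (0:ℂ) 1 := closedBall_subset_ball h1
    have hball : HasFPowerSeriesOnBall F (cauchyPowerSeries F 0 ρ) 0 ρ :=
      (hdF.mono hsub).hasFPowerSeriesOnBall h0
    have heq : q = cauchyPowerSeries F 0 ρ :=
      hq.eq_formalMultilinearSeries hball.hasFPowerSeriesAt
    have hcoeff : ‖q.coeff n‖ ≤ ‖cauchyPowerSeries F 0 ρ n‖ := by
      rw [heq, ← FormalMultilinearSeries.norm_apply_eq_norm_coef]
    have hint : (∫ θ : ℝ in (0)..2 * Real.pi, ‖F (circleMap 0 ρ θ)‖) ≤ 2 * Real.pi := by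
      have hc : ContinuousOn F (ball (0:ℂ) 1) := hdF.continuousOn
      have hcont : Continuous fun θ : ℝ => ‖F (circleMap 0 ρ θ)‖ := by
        apply Continuous.norm
        apply hc.comp_continuous (continuous_circleMap 0 ρ)
        intro θ
        rw [mem_ball_zero_iff, norm_circleMap_zero,
          NNReal.abs_eq ρ]
        exact h1
      calc (∫ θ : ℝ in (0)..2 * Real.pi, ‖F (circleMap 0 ρ θ)‖)
          ≤ ∫ _ : ℝ in (0)..2 * Real.pi, (1:ℝ) := by
            apply intervalIntegral.integral_mono_on Real.two_pi_pos.le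
              (hcont.intervalIntegrable _ _) (intervalIntegrable_const)
            intro θ _
            apply hbF
            rw [norm_circleMap_zero, NNReal.abs_eq ρ]
            exact h1
        _ = 2 * Real.pi := by simp
    have hnorm := norm_cauchyPowerSeries_le F 0 ρ n
    have h2pi : (0:ℝ) < (2 * Real.pi)⁻¹ := by positivity
    calc ‖q.coeff n‖ ≤ ‖cauchyPowerSeries F 0 ρ n‖ := hcoeff
      _ ≤ ((2 * Real.pi)⁻¹ * ∫ θ : ℝ in (0)..2 * Real.pi, ‖F (circleMap 0 ρ θ)‖) * |(ρ:ℝ)|⁻¹ ^ n :=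
          hnorm
      _ ≤ ((2 * Real.pi)⁻¹ * (2 * Real.pi)) * |(ρ:ℝ)|⁻¹ ^ n := by
          apply mul_le_mul_of_nonneg_right
          · exact mul_le_mul_of_nonneg_left hint h2pi.le
          · positivity
      _ = (ρ:ℝ)⁻¹ ^ n := by
          rw [inv_mul_cancel₀ (by positivity : (2 * Real.pi) ≠ 0), one_mul,
            NNReal.abs_eq ρ]
  -- let ρ → 1
  have htend : Tendsto (fun ρ : ℝ => ρ⁻¹ ^ n) (nhdsWithin 1 (Ioo (0:ℝ) 1)) (𝓝 1) := by
    have hca : ContinuousAt (fun ρ : ℝ => ρ⁻¹ ^ n) 1 := by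
      exact (continuousAt_inv₀ one_ne_zero).pow n
    have := hca.continuousWithinAt (s := Ioo (0:ℝ) 1)
    simpa using this.tendsto
  have hne : (nhdsWithin (1:ℝ) (Ioo (0:ℝ) 1)).NeBot := by
    apply mem_closure_iff_nhdsWithin_neBot.mp
    rw [closure_Ioo one_ne_zero.symm]
    exact ⟨le_of_lt one_pos, le_refl 1⟩
  refine ge_of_tendsto htend ?_
  filter_upwards [self_mem_nhdsWithin] with ρ hρ
  have h0 : (0:ℝ) < ρ := hρ.1
  lift ρ to ℝ≥0 using h0.le with ρ'
  exact key ρ' (by exact_mod_cast h0) hρ.2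

lemma mobius_normSq_identity (a z : ℂ) :
    Complex.normSq (1 - (starRingEnd ℂ) a * z) - Complex.normSq (a - z)
      = (1 - Complex.normSq a) * (1 - Complex.normSq z) := by
  simp only [Complex.normSq_apply, Complex.sub_re, Complex.sub_im, Complex.one_re, Complex.one_im,
    Complex.mul_re, Complex.mul_im, Complex.conj_re, Complex.conj_im]
  ring

lemma mobius_den_norm_pos {a z : ℂ} (ha : ‖a‖ < 1) (hz : ‖z‖ ≤ 1) :
    0 < ‖(1 : ℂ) - (starRingEnd ℂ) a * z‖ := by
  have h : ‖(starRingEnd ℂ) a * z‖ < 1 := by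
    rw [norm_mul, RCLike.norm_conj]
    calc ‖a‖ * ‖z‖ ≤ ‖a‖ * 1 := by
          exact mul_le_mul_of_nonneg_left hz (norm_nonneg a)
      _ < 1 := by simpa using ha
  have : (1 : ℂ) - (starRingEnd ℂ) a * z ≠ 0 := by
    intro hc
    have : (1 : ℂ) = (starRingEnd ℂ) a * z := by linear_combination hc
    rw [← this] at h
    simp at h
  simpa [norm_pos_iff] using this

lemma mobius_norm_lt {a z : ℂ} (ha : ‖a‖ < 1) (hz : ‖z‖ < 1) :
    ‖(a - z) * ((1 : ℂ) - (starRingEnd ℂ) a * z)⁻¹‖ < 1 := by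
  have hden := mobius_den_norm_pos ha hz.le
  rw [norm_mul, norm_inv, mul_inv_lt_iff₀ hden, one_mul]
  have h2 : Complex.normSq (a - z) < Complex.normSq (1 - (starRingEnd ℂ) a * z) := by
    have hid := mobius_normSq_identity a z
    have h3 : 0 < (1 - Complex.normSq a) * (1 - Complex.normSq z) := by
      apply mul_pos
      · rw [Complex.normSq_eq_norm_sq]; nlinarith [norm_nonneg a, ha]
      · rw [Complex.normSq_eq_norm_sq]; nlinarith [norm_nonneg z, hz]
    linarith
  rw [Complex.normSq_eq_norm_sq, Complex.normSq_eq_norm_sq] at h2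
  have := norm_nonneg (a - z)
  nlinarith [norm_nonneg (1 - (starRingEnd ℂ) a * z)]

/-- coefficient of a product `F * u` at order `k` when `F` vanishes to order `k`. -/
lemma coeff_mul_of_low_vanish {F u : ℂ → ℂ} {qF s : FormalMultilinearSeries ℂ ℂ ℂ} (k : ℕ)
    (hF : HasFPowerSeriesAt F qF 0) (hu : AnalyticAt ℂ u 0)
    (hlow : ∀ j < k, qF.coeff j = 0)
    (hs : HasFPowerSeriesAt (fun z => F z * u z) s 0) :
    s.coeff k = qF.coeff k * u 0 := by
  have hval : ∀ j : ℕ, ((swap dslope 0)^[j] F) 0 = qF.coeff j := by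
    intro j
    have h := hF.has_fpower_series_iterate_dslope_fslope j
    have h0 : (FormalMultilinearSeries.fslope^[j] qF).coeff 0 = ((swap dslope 0)^[j] F) 0 :=
      h.coeff_zero (fun _ => (1:ℂ))
    rw [FormalMultilinearSeries.coeff_iterate_fslope] at h0
    simpa using h0.symm
  have key : ∀ j : ℕ, j ≤ k →
      (swap dslope 0)^[j] (fun z => F z * u z) = fun z => ((swap dslope 0)^[j] F) z * u z := by
    intro j hj
    induction j with
    | zero => simp
    | succ j ih =>
      have hj' : j ≤ k := Nat.le_of_succ_le hj
      have hjk : j < k := hj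
      rw [iterate_succ_apply', iterate_succ_apply', ih hj']
      have hFj : AnalyticAt ℂ ((swap dslope 0)^[j] F) 0 :=
        (hF.has_fpower_series_iterate_dslope_fslope j).analyticAt
      have hFj0 : ((swap dslope 0)^[j] F) 0 = 0 := by rw [hval j]; exact hlow j hjk
      funext z
      rcases eq_or_ne z 0 with rfl | hz
      · simp only [dslope_same]
        rw [deriv_fun_mul hFj.differentiableAt hu.differentiableAt, hFj0]
        ring
      · simp only [dslope_of_ne _ hz, slope_def_field, hFj0]
        field_simp
        ring
  have hcoeff_s : s.coeff k = ((swap dslope 0)^[k] (fun z => F z * u z)) 0 := by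
    have h := hs.has_fpower_series_iterate_dslope_fslope k
    have h0 : (FormalMultilinearSeries.fslope^[k] s).coeff 0
        = ((swap dslope 0)^[k] (fun z => F z * u z)) 0 := h.coeff_zero (fun _ => (1:ℂ))
    rw [FormalMultilinearSeries.coeff_iterate_fslope] at h0
    simpa using h0
  rw [hcoeff_s, key k le_rfl]
  simp [hval k]

lemma wiener_bound {f : ℂ → ℂ} {p : FormalMultilinearSeries ℂ ℂ ℂ}
    (hd : DifferentiableOn ℂ f (ball (0:ℂ) 1))
    (hb : ∀ z : ℂ, ‖z‖ < 1 → ‖f z‖ < 1)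
    (hp : HasFPowerSeriesAt f p 0) (k : ℕ) (hk : 1 ≤ k) :
    ‖p.coeff k‖ ≤ 1 - ‖f 0‖ ^ 2 := by
  have hk0 : (k:ℂ) ≠ 0 := Nat.cast_ne_zero.mpr (by omega)
  have hk0' : (k:ℝ) ≠ 0 := Nat.cast_ne_zero.mpr (by omega)
  set a : ℂ := f 0 with ha_def
  have ha : ‖a‖ < 1 := hb 0 (by norm_num)
  -- the root of unity
  set ω : ℂ := Complex.exp ((2 * Real.pi / k : ℝ) * Complex.I) with hω_def
  have hω_norm : ‖ω‖ = 1 := by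
    rw [hω_def, Complex.norm_exp]
    simp
  have hωk : ω ^ k = 1 := by
    rw [hω_def, ← Complex.exp_nat_mul]
    have : (k : ℂ) * ((2 * Real.pi / k : ℝ) * Complex.I) = 2 * Real.pi * Complex.I := by
      push_cast
      field_simp
    rw [this, Complex.exp_two_pi_mul_I]
  have hωn : ∀ n : ℕ, 0 < n → n < k → ω ^ n ≠ 1 := by
    intro n hn hnk hcon
    rw [hω_def, ← Complex.exp_nat_mul] at hcon
    rw [Complex.exp_eq_one_iff] at hcon
    obtain ⟨n', hn'⟩ := hcon
    have him : (n : ℝ) * (2 * Real.pi / k) = n' * (2 * Real.pi) := by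
      have := congrArg Complex.im hn'
      simpa [Complex.mul_im, Complex.mul_re] using this
    have hpi := Real.pi_pos
    have hkpos : (0:ℝ) < k := by positivity
    have heq : (n : ℝ) = n' * k := by
      field_simp at him
      nlinarith [him]
    have hn'lt : (n' : ℝ) < 1 := by
      have hnk' : (n:ℝ) < (k:ℝ) := by exact_mod_cast hnk
      nlinarith
    have hn'pos : (0:ℝ) < n' := by
      have hn0 : (0:ℝ) < (n:ℝ) := by exact_mod_cast hn
      nlinarith
    have h1 : (0:ℤ) < n' := by exact_mod_cast hn'pos
    have h2 : (n':ℤ) < 1 := by exact_mod_cast hn'lt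
    omega
  -- geometric sums
  have hS : ∀ n : ℕ, 0 < n → n < k → (∑ j ∈ Finset.range k, ω ^ (j * n)) = 0 := by
    intro n hn hnk
    have : (∑ j ∈ Finset.range k, ω ^ (j * n)) = ∑ j ∈ Finset.range k, (ω ^ n) ^ j := by
      apply Finset.sum_congr rfl
      intro j _
      rw [← pow_mul, mul_comm]
    rw [this, geom_sum_eq (hωn n hn hnk)]
    have : (ω ^ n) ^ k = 1 := by
      rw [← pow_mul, mul_comm, pow_mul, hωk, one_pow]
    rw [this]
    simp
  -- the symmetrized function
  set g : ℂ → ℂ := fun z => (k:ℂ)⁻¹ * ∑ j ∈ Finset.range k, f (ω ^ j * z) with hg_def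
  have hmem : ∀ (j : ℕ) (z : ℂ), ‖z‖ < 1 → ‖ω ^ j * z‖ < 1 := by
    intro j z hz
    rw [norm_mul, norm_pow, hω_norm, one_pow, one_mul]
    exact hz
  have hgd : DifferentiableOn ℂ g (ball (0:ℂ) 1) := by
    apply DifferentiableOn.const_mul
    apply DifferentiableOn.fun_sum
    intro j _
    have : DifferentiableOn ℂ (fun z : ℂ => ω ^ j * z) (ball (0:ℂ) 1) :=
      (differentiable_id.const_mul _).differentiableOn
    apply DifferentiableOn.comp hd this
    intro z hz
    rw [mem_ball_zero_iff] at hz ⊢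
    exact hmem j z hz
  have hgb : ∀ z : ℂ, ‖z‖ < 1 → ‖g z‖ < 1 := by
    intro z hz
    rw [hg_def]
    calc ‖(k:ℂ)⁻¹ * ∑ j ∈ Finset.range k, f (ω ^ j * z)‖
        = (k:ℝ)⁻¹ * ‖∑ j ∈ Finset.range k, f (ω ^ j * z)‖ := by
          rw [norm_mul, norm_inv]
          norm_num
      _ ≤ (k:ℝ)⁻¹ * ∑ j ∈ Finset.range k, ‖f (ω ^ j * z)‖ := by
          apply mul_le_mul_of_nonneg_left (norm_sum_le _ _) (by positivity)
      _ < (k:ℝ)⁻¹ * ∑ j ∈ Finset.range k, 1 := by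
          apply mul_lt_mul_of_pos_left
          · apply Finset.sum_lt_sum_of_nonempty
            · exact Finset.nonempty_range_iff.mpr (by omega)
            · intro j _
              exact hb _ (hmem j z hz)
          · have : (0:ℝ) < k := by positivity
            positivity
      _ = 1 := by
          rw [Finset.sum_const, Finset.card_range]
          simp
          exact inv_mul_cancel₀ hk0'
  have hg0 : g 0 = a := by
    rw [hg_def]
    simp only [mul_zero, Finset.sum_const, Finset.card_range, nsmul_eq_mul]
    rw [← mul_assoc, inv_mul_cancel₀ hk0, one_mul]
  -- power series of g
  set cg : ℕ → ℂ := fun n => (k:ℂ)⁻¹ * (∑ j ∈ Finset.range k, ω ^ (j * n)) * p.coeff n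
    with hcg_def
  set q : FormalMultilinearSeries ℂ ℂ ℂ := FormalMultilinearSeries.ofScalars ℂ cg with hq_def
  have hq_coeff : ∀ n, q.coeff n = cg n := by
    intro n
    show q n (fun _ => 1) = cg n
    rw [hq_def, FormalMultilinearSeries.ofScalars_apply_eq]
    simp
  obtain ⟨R, hRball⟩ := hp
  have hq : HasFPowerSeriesAt g q 0 := by
    rw [hasFPowerSeriesAt_iff]
    filter_upwards [EMetric.ball_mem_nhds (0:ℂ) hRball.r_pos] with z hz
    have hsum : ∀ j : ℕ, HasSum (fun n => (ω ^ j * z) ^ n • p.coeff n) (f (ω ^ j * z)) := by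
      intro j
      have hmem' : ω ^ j * z ∈ Metric.eball (0:ℂ) R := by
        have hnn : ‖ω ^ j * z‖₊ = ‖z‖₊ := by
          apply NNReal.coe_injective
          push_cast
          rw [norm_mul, norm_pow, hω_norm, one_pow, one_mul]
        rw [Metric.mem_eball, edist_nndist, nndist_zero_right, hnn]
        rw [Metric.mem_eball, edist_nndist, nndist_zero_right] at hz
        exact hz
      have := hRball.hasSum hmem'
      simp only [zero_add] at this
      simpa only [FormalMultilinearSeries.apply_eq_pow_smul_coeff] using this
    have htot := (hasSum_sum (f := fun j n => (ω ^ j * z) ^ n • p.coeff n)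
      (fun j (_ : j ∈ Finset.range k) => hsum j)).mul_left (k:ℂ)⁻¹
    have hfun : (fun n => (k:ℂ)⁻¹ * ∑ j ∈ Finset.range k, (ω ^ j * z) ^ n • p.coeff n)
        = fun n => z ^ n • cg n := by
      funext n
      simp only [hcg_def, smul_eq_mul, mul_pow, ← pow_mul, Finset.mul_sum, Finset.sum_mul]
      apply Finset.sum_congr rfl
      intro j _
      ring
    rw [hfun] at htot
    simpa [hq_coeff, hg_def, zero_add] using htot
  -- F and u
  set F : ℂ → ℂ := fun z => a - g z with hF_def
  set u : ℂ → ℂ := fun z => ((1:ℂ) - (starRingEnd ℂ) a * g z)⁻¹ with hu_def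
  have hganal : AnalyticAt ℂ g 0 := hq.analyticAt
  have hga : ‖g 0‖ < 1 := by rw [hg0]; exact ha
  have hden0 : (1:ℂ) - (starRingEnd ℂ) a * g 0 ≠ 0 :=
    norm_pos_iff.mp (mobius_den_norm_pos ha hga.le)
  have hu_anal : AnalyticAt ℂ u 0 := by
    rw [hu_def]
    exact ((analyticAt_const.sub (analyticAt_const.mul hganal)).inv hden0)
  -- series of F
  set cF : ℕ → ℂ := fun n => (if n = 0 then a else 0) - cg n with hcF_def
  set qF : FormalMultilinearSeries ℂ ℂ ℂ := FormalMultilinearSeries.ofScalars ℂ cF with hqF_def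
  have hqF_coeff : ∀ n, qF.coeff n = cF n := by
    intro n
    show qF n (fun _ => 1) = cF n
    rw [hqF_def, FormalMultilinearSeries.ofScalars_apply_eq]
    simp
  have hqF : HasFPowerSeriesAt F qF 0 := by
    rw [hasFPowerSeriesAt_iff]
    have hgsum := hasFPowerSeriesAt_iff.mp hq
    filter_upwards [hgsum] with z hz
    simp only [hq_coeff, zero_add] at hz
    have h1 : HasSum (fun n : ℕ => if n = 0 then a else 0) a := hasSum_ite_eq 0 a
    have h2 := h1.sub hz
    have : (fun n : ℕ => (if n = 0 then a else 0) - z ^ n • cg n)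
        = fun n => z ^ n • (qF.coeff n) := by
      funext n
      rw [hqF_coeff, hcF_def]
      rcases eq_or_ne n 0 with rfl | hn
      · simp
      · simp [hn]
    rw [this] at h2
    simpa [hF_def, hg0] using h2
  -- coefficients of qF
  have hcg0 : cg 0 = a := by
    have hp0 : p.coeff 0 = f 0 := hRball.hasFPowerSeriesAt.coeff_zero (fun _ => (1:ℂ))
    simp only [hcg_def, pow_zero, mul_zero, Finset.sum_const, Finset.card_range, nsmul_eq_mul,
      mul_one, hp0, ← ha_def]
    rw [inv_mul_cancel₀ hk0, one_mul]
  have hωjk : ∀ j ∈ Finset.range k, ω ^ (j * k) = 1 := by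
    intro j _
    rw [mul_comm, pow_mul, hωk, one_pow]
  have hcgk : cg k = p.coeff k := by
    simp only [hcg_def]
    rw [Finset.sum_congr rfl hωjk, Finset.sum_const, Finset.card_range, nsmul_eq_mul, mul_one,
      inv_mul_cancel₀ hk0, one_mul]
  have hlow : ∀ j, j < k → qF.coeff j = 0 := by
    intro j hj
    rw [hqF_coeff, hcF_def]
    rcases eq_or_ne j 0 with rfl | hjne
    · simp [hcg0]
    · have : cg j = 0 := by
        rw [hcg_def]
        simp only [hcg_def]
        rw [hS j (by omega) hj]
        ring
      simp [hjne, this]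
  have hkne : k ≠ 0 := by omega
  have hqFk : qF.coeff k = -(p.coeff k) := by
    rw [hqF_coeff]
    simp only [hcF_def]
    rw [if_neg hkne, hcgk, zero_sub]
  -- h = F * u
  have hh_anal : AnalyticAt ℂ (fun z => F z * u z) 0 := (hqF.analyticAt.mul hu_anal)
  obtain ⟨s, hs⟩ := hh_anal
  have hsk := coeff_mul_of_low_vanish k hqF hu_anal hlow hs
  -- bound on h
  have hden_ne : ∀ z : ℂ, ‖z‖ < 1 → (1:ℂ) - (starRingEnd ℂ) a * g z ≠ 0 := by
    intro z hz
    exact norm_pos_iff.mp (mobius_den_norm_pos ha (hgb z hz).le)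
  have hh_d : DifferentiableOn ℂ (fun z => F z * u z) (ball (0:ℂ) 1) := by
    apply DifferentiableOn.mul
    · exact (differentiableOn_const a).sub hgd
    · apply DifferentiableOn.inv
      · exact (differentiableOn_const _).sub ((differentiableOn_const _).mul hgd)
      · intro z hz
        exact hden_ne z (mem_ball_zero_iff.mp hz)
  have hh_b : ∀ z : ℂ, ‖z‖ < 1 → ‖F z * u z‖ ≤ 1 := by
    intro z hz
    exact (mobius_norm_lt ha (hgb z hz)).le
  have hbound := coeff_norm_le_one hh_d hh_b hs k
  rw [hsk, hqFk] at hbound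
  -- unravel the bound
  have hu0 : u 0 = ((1:ℂ) - (starRingEnd ℂ) a * a)⁻¹ := by
    simp only [hu_def]
    rw [hg0]
  have hconj : (starRingEnd ℂ) a * a = (Complex.normSq a : ℂ) := by
    rw [mul_comm, Complex.mul_conj]
  have hnormSq_lt : Complex.normSq a < 1 := by
    rw [Complex.normSq_eq_norm_sq]
    nlinarith [norm_nonneg a]
  have hnorm_u0 : ‖u 0‖ = (1 - Complex.normSq a)⁻¹ := by
    rw [hu0, hconj, norm_inv]
    have : (1:ℂ) - (Complex.normSq a : ℂ) = ((1 - Complex.normSq a : ℝ) : ℂ) := by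
      push_cast
      ring
    rw [this, Complex.norm_real, Real.norm_eq_abs, abs_of_pos (by linarith)]
  rw [norm_mul, norm_neg, hnorm_u0] at hbound
  have hpos : (0:ℝ) < 1 - Complex.normSq a := by linarith
  have hsq : Complex.normSq a = ‖a‖ ^ 2 := by
    rw [Complex.normSq_eq_norm_sq]
  calc ‖p.coeff k‖ = ‖p.coeff k‖ * (1 - Complex.normSq a)⁻¹ * (1 - Complex.normSq a) := by
        field_simp
    _ ≤ 1 * (1 - Complex.normSq a) := by
        apply mul_le_mul_of_nonneg_right hbound hpos.le
    _ = 1 - ‖f 0‖ ^ 2 := by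
        rw [one_mul, hsq, ← ha_def]

/-- derivative of the Möbius map `x ↦ (c - x)/(1 - c̄ x)`. -/
lemma mobius_hasDerivAt (c z : ℂ) (h : (1:ℂ) - (starRingEnd ℂ) c * z ≠ 0) :
    HasDerivAt (fun x : ℂ => (c - x) * ((1:ℂ) - (starRingEnd ℂ) c * x)⁻¹)
      ((c * (starRingEnd ℂ) c - 1) * (((1:ℂ) - (starRingEnd ℂ) c * z) ^ 2)⁻¹) z := by
  have h1 : HasDerivAt (fun x : ℂ => c - x) (-1) z := by
    simpa using (hasDerivAt_id z).const_sub c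
  have h2 : HasDerivAt (fun x : ℂ => (1:ℂ) - (starRingEnd ℂ) c * x) (-(starRingEnd ℂ) c) z := by
    simpa using ((hasDerivAt_id z).const_mul ((starRingEnd ℂ) c)).const_sub 1
  have h3 := h2.inv h
  have h4 := h1.mul h3
  refine h4.congr_deriv ?_
  simp only [Pi.inv_apply]
  field_simp
  ring
/-- Schwarz–Pick derivative bound at an interior point. -/
lemma schwarz_pick_deriv {f : ℂ → ℂ}
    (hd : DifferentiableOn ℂ f (ball (0:ℂ) 1))
    (hb : ∀ z : ℂ, ‖z‖ < 1 → ‖f z‖ < 1)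
    {w : ℂ} (hw : ‖w‖ < 1) :
    ‖deriv f w‖ * (1 - ‖w‖ ^ 2) ≤ 1 - ‖f w‖ ^ 2 := by
  set b : ℂ := f w with hb_def
  have hbw : ‖b‖ < 1 := hb w hw
  set ψ : ℂ → ℂ := fun z => (w - z) * ((1:ℂ) - (starRingEnd ℂ) w * z)⁻¹ with hψ_def
  set Φ : ℂ → ℂ := fun z => (b - f (ψ z)) * ((1:ℂ) - (starRingEnd ℂ) b * f (ψ z))⁻¹ with hΦ_def
  have hψmaps : ∀ z : ℂ, ‖z‖ < 1 → ‖ψ z‖ < 1 := fun z hz => mobius_norm_lt hw hz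
  have hψ0 : ψ 0 = w := by simp [hψ_def]
  have hΦ0 : Φ 0 = 0 := by simp [hΦ_def, hψ0, hb_def]
  have hψd : DifferentiableOn ℂ ψ (ball (0:ℂ) 1) := by
    apply DifferentiableOn.mul
    · exact (differentiableOn_const w).sub differentiableOn_id
    · apply DifferentiableOn.inv
      · exact (differentiableOn_const _).sub ((differentiableOn_const _).mul differentiableOn_id)
      · intro z hz
        exact norm_pos_iff.mp (mobius_den_norm_pos hw (mem_ball_zero_iff.mp hz).le)
  have hfψd : DifferentiableOn ℂ (fun z => f (ψ z)) (ball (0:ℂ) 1) := by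
    apply DifferentiableOn.comp hd hψd
    intro z hz
    rw [mem_ball_zero_iff] at hz ⊢
    exact hψmaps z hz
  have hfψb : ∀ z : ℂ, ‖z‖ < 1 → ‖f (ψ z)‖ < 1 := fun z hz => hb _ (hψmaps z hz)
  have hΦd : DifferentiableOn ℂ Φ (ball (0:ℂ) 1) := by
    apply DifferentiableOn.mul
    · exact (differentiableOn_const b).sub hfψd
    · apply DifferentiableOn.inv
      · exact (differentiableOn_const _).sub ((differentiableOn_const _).mul hfψd)
      · intro z hz
        exact norm_pos_iff.mp (mobius_den_norm_pos hbw (hfψb z (mem_ball_zero_iff.mp hz)).le)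
  have hΦmaps : MapsTo Φ (ball (0:ℂ) 1) (ball (Φ 0) 1) := by
    intro z hz
    rw [mem_ball_zero_iff] at hz
    rw [hΦ0, mem_ball_zero_iff]
    exact mobius_norm_lt hbw (hfψb z hz)
  have hschwarz : ‖deriv Φ 0‖ ≤ 1 := by
    have := Complex.norm_deriv_le_div_of_mapsTo_ball hΦd (hΦmaps.mono_right ball_subset_closedBall) one_pos
    simpa using this
  -- compute deriv Φ 0
  have hfder : HasDerivAt f (deriv f w) w := by
    have : DifferentiableAt ℂ f w :=
      hd.differentiableAt (isOpen_ball.mem_nhds (mem_ball_zero_iff.mpr hw))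
    exact this.hasDerivAt
  have hψden0 : (1:ℂ) - (starRingEnd ℂ) w * 0 ≠ 0 := by simp
  have hψder : HasDerivAt ψ (w * (starRingEnd ℂ) w - 1) 0 := by
    have := mobius_hasDerivAt w 0 hψden0
    simpa using this
  have hbden : (1:ℂ) - (starRingEnd ℂ) b * b ≠ 0 :=
    norm_pos_iff.mp (mobius_den_norm_pos hbw hbw.le)
  have hφbder : HasDerivAt (fun x : ℂ => (b - x) * ((1:ℂ) - (starRingEnd ℂ) b * x)⁻¹)
      ((b * (starRingEnd ℂ) b - 1) * (((1:ℂ) - (starRingEnd ℂ) b * b) ^ 2)⁻¹) b :=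
    mobius_hasDerivAt b b hbden
  have hfder' : HasDerivAt f (deriv f w) (ψ 0) := by rw [hψ0]; exact hfder
  have hinner : HasDerivAt (fun z => f (ψ z)) (deriv f w * (w * (starRingEnd ℂ) w - 1)) 0 :=
    HasDerivAt.comp 0 hfder' hψder
  have hφbder' : HasDerivAt (fun x : ℂ => (b - x) * ((1:ℂ) - (starRingEnd ℂ) b * x)⁻¹)
      ((b * (starRingEnd ℂ) b - 1) * (((1:ℂ) - (starRingEnd ℂ) b * b) ^ 2)⁻¹)
      ((fun z => f (ψ z)) 0) := by
    have he : (fun z => f (ψ z)) 0 = b := by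
      show f (ψ 0) = b
      rw [hψ0]
    rw [he]
    exact hφbder
  have hΦder : HasDerivAt Φ
      ((b * (starRingEnd ℂ) b - 1) * (((1:ℂ) - (starRingEnd ℂ) b * b) ^ 2)⁻¹ *
        (deriv f w * (w * (starRingEnd ℂ) w - 1))) 0 :=
    by have := HasDerivAt.comp 0 hφbder' hinner; exact this
  have hderiv_eq : deriv Φ 0 =
      (b * (starRingEnd ℂ) b - 1) * (((1:ℂ) - (starRingEnd ℂ) b * b) ^ 2)⁻¹ *
        (deriv f w * (w * (starRingEnd ℂ) w - 1)) := hΦder.deriv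
  -- norms
  have hnsb : b * (starRingEnd ℂ) b = (Complex.normSq b : ℂ) := Complex.mul_conj b
  have hnsw : w * (starRingEnd ℂ) w = (Complex.normSq w : ℂ) := Complex.mul_conj w
  have hnsb' : (starRingEnd ℂ) b * b = (Complex.normSq b : ℂ) := by rw [mul_comm]; exact hnsb
  have hsqb : Complex.normSq b < 1 := by
    rw [Complex.normSq_eq_norm_sq]
    nlinarith [norm_nonneg b]
  have hsqw : Complex.normSq w < 1 := by
    rw [Complex.normSq_eq_norm_sq]
    nlinarith [norm_nonneg w]
  have hnorm_eq : ‖deriv Φ 0‖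
      = (1 - Complex.normSq b)⁻¹ * (‖deriv f w‖ * (1 - Complex.normSq w)) := by
    rw [hderiv_eq, hnsb, hnsw, hnsb']
    rw [norm_mul, norm_mul, norm_mul, norm_inv, norm_pow]
    have e1 : ‖(Complex.normSq b : ℂ) - 1‖ = 1 - Complex.normSq b := by
      rw [show (Complex.normSq b : ℂ) - 1 = ((Complex.normSq b - 1 : ℝ) : ℂ) from by push_cast; ring,
        Complex.norm_real, Real.norm_eq_abs, abs_of_neg (by linarith)]
      ring
    have e2 : ‖(Complex.normSq w : ℂ) - 1‖ = 1 - Complex.normSq w := by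
      rw [show (Complex.normSq w : ℂ) - 1 = ((Complex.normSq w - 1 : ℝ) : ℂ) from by push_cast; ring,
        Complex.norm_real, Real.norm_eq_abs, abs_of_neg (by linarith)]
      ring
    have e3 : ‖(1:ℂ) - (Complex.normSq b : ℂ)‖ = 1 - Complex.normSq b := by
      rw [show (1:ℂ) - (Complex.normSq b : ℂ) = ((1 - Complex.normSq b : ℝ) : ℂ) from by push_cast; ring,
        Complex.norm_real, Real.norm_eq_abs, abs_of_pos (by linarith)]
    rw [e1, e2, e3]
    have hpos : 0 < 1 - Complex.normSq b := by linarith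
    field_simp
  rw [hnorm_eq] at hschwarz
  have hposb : 0 < 1 - Complex.normSq b := by linarith
  have hfinal : ‖deriv f w‖ * (1 - Complex.normSq w) ≤ 1 - Complex.normSq b := by
    have h := mul_le_mul_of_nonneg_left hschwarz hposb.le
    rw [← mul_assoc, mul_inv_cancel₀ hposb.ne', one_mul, mul_one] at h
    exact h
  have hw2 : ‖w‖ ^ 2 = Complex.normSq w := by rw [Complex.normSq_eq_norm_sq]
  have hb2 : ‖f w‖ ^ 2 = Complex.normSq b := by
    rw [Complex.normSq_eq_norm_sq, hb_def]
  rw [hw2, hb2]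
  exact hfinal

/-- Schwarz–Pick value bound. -/
lemma schwarz_pick_value {f : ℂ → ℂ}
    (hd : DifferentiableOn ℂ f (ball (0:ℂ) 1))
    (hb : ∀ z : ℂ, ‖z‖ < 1 → ‖f z‖ < 1)
    {w : ℂ} (hw : ‖w‖ < 1) :
    ‖f w‖ * (1 + ‖f 0‖ * ‖w‖) ≤ ‖f 0‖ + ‖w‖ := by
  set a : ℂ := f 0 with ha_def
  have ha : ‖a‖ < 1 := hb 0 (by norm_num)
  set F : ℂ → ℂ := fun z => (a - f z) * ((1:ℂ) - (starRingEnd ℂ) a * f z)⁻¹ with hF_def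
  have hFd : DifferentiableOn ℂ F (ball (0:ℂ) 1) := by
    apply DifferentiableOn.mul
    · exact (differentiableOn_const a).sub hd
    · apply DifferentiableOn.inv
      · exact (differentiableOn_const _).sub ((differentiableOn_const _).mul hd)
      · intro z hz
        exact norm_pos_iff.mp (mobius_den_norm_pos ha (hb z (mem_ball_zero_iff.mp hz)).le)
  have hFmaps : MapsTo F (ball (0:ℂ) 1) (ball (0:ℂ) 1) := by
    intro z hz
    rw [mem_ball_zero_iff] at hz ⊢
    exact mobius_norm_lt ha (hb z hz)
  have hF0 : F 0 = 0 := by simp [hF_def, ← ha_def]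
  have hsch : ‖F w‖ ≤ ‖w‖ :=
    Complex.norm_le_norm_of_mapsTo_ball hFd (hFmaps.mono_right ball_subset_closedBall) hF0
      (by exact hw)
  -- rewrite: ‖a - f w‖ ≤ ‖w‖ * ‖1 - conj a * f w‖
  have hden_pos : 0 < ‖(1:ℂ) - (starRingEnd ℂ) a * f w‖ :=
    mobius_den_norm_pos ha (hb w hw).le
  have hineq : ‖a - f w‖ ≤ ‖w‖ * ‖(1:ℂ) - (starRingEnd ℂ) a * f w‖ := by
    have : ‖F w‖ ≤ ‖w‖ := by
      exact hsch
    rw [hF_def] at this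
    simp only [norm_mul, norm_inv] at this
    calc ‖a - f w‖ = ‖a - f w‖ * ‖(1:ℂ) - (starRingEnd ℂ) a * f w‖⁻¹
          * ‖(1:ℂ) - (starRingEnd ℂ) a * f w‖ := by
            rw [mul_assoc, inv_mul_cancel₀ hden_pos.ne', mul_one]
      _ ≤ ‖w‖ * ‖(1:ℂ) - (starRingEnd ℂ) a * f w‖ :=
          mul_le_mul_of_nonneg_right this hden_pos.le
  -- square it
  have hsq : Complex.normSq (a - f w) ≤ ‖w‖^2 * Complex.normSq ((1:ℂ) - (starRingEnd ℂ) a * f w) := by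
    rw [Complex.normSq_eq_norm_sq, Complex.normSq_eq_norm_sq]
    nlinarith [norm_nonneg (a - f w), norm_nonneg w, hden_pos,
      mul_le_mul hineq hineq (norm_nonneg _) (by positivity)]
  -- expand
  have hX : ((starRingEnd ℂ) a * f w).re ≤ ‖a‖ * ‖f w‖ := by
    calc ((starRingEnd ℂ) a * f w).re ≤ ‖(starRingEnd ℂ) a * f w‖ :=
        Complex.re_le_norm _
      _ = ‖a‖ * ‖f w‖ := by
        rw [norm_mul, Complex.norm_conj]
  have he1 : Complex.normSq (a - f w) = ‖a‖^2 - 2 * ((starRingEnd ℂ) a * f w).re + ‖f w‖^2 := by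
    simp only [Complex.normSq_sub]
    rw [Complex.normSq_eq_norm_sq, Complex.normSq_eq_norm_sq]
    have : (a * (starRingEnd ℂ) (f w)).re = ((starRingEnd ℂ) a * f w).re := by
      rw [show (starRingEnd ℂ) a * f w = (starRingEnd ℂ) (a * (starRingEnd ℂ) (f w)) from by
        rw [map_mul, Complex.conj_conj]]
      rw [Complex.conj_re]
    rw [this]
    ring
  have he2 : Complex.normSq ((1:ℂ) - (starRingEnd ℂ) a * f w)
      = 1 - 2 * ((starRingEnd ℂ) a * f w).re + ‖a‖^2 * ‖f w‖^2 := by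
    simp only [Complex.normSq_sub]
    rw [Complex.normSq_one, Complex.normSq_mul, Complex.normSq_conj]
    rw [Complex.normSq_eq_norm_sq, Complex.normSq_eq_norm_sq]
    have : ((1:ℂ) * (starRingEnd ℂ) ((starRingEnd ℂ) a * f w)).re
        = ((starRingEnd ℂ) a * f w).re := by
      rw [one_mul, Complex.conj_re]
    rw [this]
    ring
  rw [he1, he2] at hsq
  set X : ℝ := ((starRingEnd ℂ) a * f w).re
  set t : ℝ := ‖f w‖
  set A : ℝ := ‖a‖
  set ρ : ℝ := ‖w‖
  -- now pure real arithmetic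
  have ht1 : t < 1 := hb w hw
  have hA1 : A < 1 := ha
  have hρ1 : ρ < 1 := hw
  have ht0 : 0 ≤ t := norm_nonneg _
  have hA0 : 0 ≤ A := norm_nonneg _
  have hρ0 : 0 ≤ ρ := norm_nonneg _
  show t * (1 + A * ρ) ≤ A + ρ
  by_contra hcon
  push_neg at hcon
  have hQ : 0 < t * (1 + A * ρ) - (A + ρ) := by linarith
  have hAt : 0 ≤ 1 - A * t := by nlinarith
  have hP : 0 < t * (1 - A * ρ) - (A - ρ) := by nlinarith [mul_nonneg hρ0 hAt]
  have h1ρ : 0 < 1 - ρ ^ 2 := by nlinarith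
  have hXle : X - A * t ≤ 0 := by linarith
  have hprod : 2 * (1 - ρ ^ 2) * (X - A * t) ≤ 0 := by
    apply mul_nonpos_of_nonneg_of_nonpos
    · linarith
    · exact hXle
  nlinarith [mul_pos hQ hP, hsq, hprod]

lemma final_real_ineq (A t d S r ρ : ℝ)
    (hA0 : 0 ≤ A) (hA1 : A < 1) (ht0 : 0 ≤ t) (hd0 : 0 ≤ d)
    (ht : t * (1 + A * ρ) ≤ A + ρ)
    (hdb : d * (1 - ρ ^ 2) ≤ 1 - t ^ 2)
    (hS0 : 0 ≤ S) (hSb : S * (1 - r) ≤ (1 - A ^ 2) * r ^ 2)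
    (hρ0 : 0 ≤ ρ) (hρr : ρ ≤ r) (hr1 : r < 1)
    (H : 2 * r * (1 - r) + 2 * r ^ 2 * (1 + ρ) ^ 2 ≤ (1 - ρ ^ 2) * (1 - r)) :
    t + r * d + S ≤ 1 := by
  have hr0 : 0 ≤ r := hρ0.trans hρr
  have h1r : 0 < 1 - r := by linarith
  have hρ1 : ρ < 1 := lt_of_le_of_lt hρr hr1
  have h1ρ : 0 < 1 - ρ ^ 2 := by nlinarith
  have hT0 : 0 < 1 + A * ρ := by nlinarith
  have h2r : 2 * r ≤ 1 - ρ ^ 2 := by nlinarith [sq_nonneg (r * (1 + ρ)), mul_pos h1r h1r]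
  set T : ℝ := (A + ρ) / (1 + A * ρ) with hT_def
  have htT : t ≤ T := by
    rw [hT_def, le_div_iff₀ hT0]
    exact ht
  have hT1 : T ≤ 1 := by
    rw [hT_def, div_le_one hT0]
    nlinarith [mul_nonneg (sub_nonneg.mpr hA1.le) (sub_nonneg.mpr hρ1.le)]
  have hT0' : 0 ≤ T := le_trans ht0 htT
  have e1 : r * d ≤ r * (1 - t ^ 2) / (1 - ρ ^ 2) := by
    rw [le_div_iff₀ h1ρ]
    nlinarith [mul_le_mul_of_nonneg_left hdb hr0]
  have hM : t + r * (1 - t ^ 2) / (1 - ρ ^ 2) ≤ T + r * (1 - T ^ 2) / (1 - ρ ^ 2) := by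
    have h2 : r * (T + t) ≤ 1 - ρ ^ 2 := by nlinarith [htT, hT1, ht0]
    have hdiff : r * (1 - t ^ 2) / (1 - ρ ^ 2) - r * (1 - T ^ 2) / (1 - ρ ^ 2)
        = r * (T ^ 2 - t ^ 2) / (1 - ρ ^ 2) := by
      rw [div_sub_div_same]
      ring_nf
    have hbnd : r * (T ^ 2 - t ^ 2) / (1 - ρ ^ 2) ≤ T - t := by
      rw [div_le_iff₀ h1ρ]
      nlinarith [mul_le_mul_of_nonneg_right h2 (sub_nonneg.mpr htT)]
    linarith
  have hS' : S ≤ (1 - A ^ 2) * r ^ 2 / (1 - r) := by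
    rw [le_div_iff₀ h1r]
    exact hSb
  have hTsq : r * (1 - T ^ 2) / (1 - ρ ^ 2) = r * (1 - A ^ 2) / (1 + A * ρ) ^ 2 := by
    rw [hT_def]
    field_simp
    ring
  have key : (A + ρ) * (1 + A * ρ) * (1 - r) + r * (1 - A ^ 2) * (1 - r)
      + (1 - A ^ 2) * r ^ 2 * (1 + A * ρ) ^ 2 ≤ (1 + A * ρ) ^ 2 * (1 - r) := by
    have hH' : 0 ≤ (1 - ρ ^ 2) * (1 - r) - 2 * r * (1 - r) - 2 * r ^ 2 * (1 + ρ) ^ 2 := by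
      linarith
    have c1 : 0 ≤ (1 - A) * ((1 + A) *
        ((1 - ρ ^ 2) * (1 - r) - 2 * r * (1 - r) - 2 * r ^ 2 * (1 + ρ) ^ 2)) :=
      mul_nonneg (by linarith) (mul_nonneg (by linarith) hH')
    have c2 : 0 ≤ (1 - A) ^ 2 * ((1 + A) * (r ^ 2 * (ρ * (2 + ρ + A * ρ)))) := by
      apply mul_nonneg (sq_nonneg _)
      apply mul_nonneg (by linarith)
      apply mul_nonneg (sq_nonneg _)
      apply mul_nonneg hρ0
      nlinarith
    have c3 : 0 ≤ (1 - A) ^ 2 * ((1 - ρ) ^ 2 * (1 - r)) :=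
      mul_nonneg (sq_nonneg _) (mul_nonneg (sq_nonneg _) h1r.le)
    nlinarith [c1, c2, c3]
  have hsum : T + r * (1 - A ^ 2) / (1 + A * ρ) ^ 2 + (1 - A ^ 2) * r ^ 2 / (1 - r)
      = ((A + ρ) * (1 + A * ρ) * (1 - r) + r * (1 - A ^ 2) * (1 - r)
        + (1 - A ^ 2) * r ^ 2 * (1 + A * ρ) ^ 2) / ((1 + A * ρ) ^ 2 * (1 - r)) := by
    rw [hT_def]
    field_simp
  have hfin : T + r * (1 - A ^ 2) / (1 + A * ρ) ^ 2 + (1 - A ^ 2) * r ^ 2 / (1 - r) ≤ 1 := by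
    rw [hsum, div_le_one (by positivity)]
    exact key
  rw [hTsq] at hM
  linarith

/-- Theorem 4 (sufficiency): improved Bohr inequality with `|f(zᵐ)| + |z||f'(zᵐ)|`. -/
theorem bohr_improved_three (f : ℂ → ℂ)
    (hd : DifferentiableOn ℂ f (Metric.ball (0 : ℂ) 1))
    (hb : ∀ z : ℂ, ‖z‖ < 1 → ‖f z‖ < 1)
    (m : ℕ) (hm : 1 ≤ m) (r : ℝ) (hr : r ∈ Set.Ico (0 : ℝ) 1)
    (hroot : 3 * r - 1 + r ^ m * (2 * r ^ 2 * (r ^ m + 2) + r ^ m * (1 - r)) ≤ 0) :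
    ∀ z : ℂ, ‖z‖ = r →
      ‖f (z ^ m)‖ + ‖z‖ * ‖deriv f (z ^ m)‖ +
        ∑' k : ℕ, ‖iteratedDeriv (k + 2) f 0 / (Nat.factorial (k + 2) : ℂ)‖ * r ^ (k + 2)
        ≤ 1 := by
  intro z hz
  obtain ⟨hr0, hr1⟩ := hr
  -- power series of f at 0
  obtain ⟨p, hp⟩ : AnalyticAt ℂ f 0 := hd.analyticAt (isOpen_ball.mem_nhds (by simp))
  obtain ⟨R, hpR⟩ := hp
  have hcoeff : ∀ n : ℕ, iteratedDeriv n f 0 / ((n.factorial : ℂ)) = p.coeff n := by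
    intro n
    have h1 := hpR.factorial_smul (1:ℂ) n
    have h2 : iteratedDeriv n f 0 = (n.factorial : ℂ) * p.coeff n := by
      rw [iteratedDeriv_eq_iteratedFDeriv, ← h1, nsmul_eq_mul]
      push_cast
      rfl
    rw [h2]
    have : ((n.factorial : ℂ)) ≠ 0 := Nat.cast_ne_zero.mpr n.factorial_ne_zero
    field_simp
  -- basic quantities
  set A : ℝ := ‖f 0‖ with hA_def
  have hA1 : A < 1 := hb 0 (by norm_num)
  have hA0 : 0 ≤ A := norm_nonneg _
  -- Wiener bounds
  have hW : ∀ k : ℕ, 1 ≤ k → ‖p.coeff k‖ ≤ 1 - A ^ 2 :=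
    fun k hk => wiener_bound hd hb hpR.hasFPowerSeriesAt k hk
  -- tail estimate
  have hgeo : Summable (fun k : ℕ => r ^ (k + 2)) := by
    apply ((summable_geometric_of_lt_one hr0 hr1).mul_right (r ^ 2)).congr
    intro k
    rw [← pow_add]
  have hterm : ∀ k : ℕ, ‖p.coeff (k + 2)‖ * r ^ (k + 2) ≤ (1 - A ^ 2) * r ^ (k + 2) := by
    intro k
    exact mul_le_mul_of_nonneg_right (hW (k + 2) (by omega)) (by positivity)
  have hsumm : Summable (fun k : ℕ => ‖p.coeff (k + 2)‖ * r ^ (k + 2)) :=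
    Summable.of_nonneg_of_le (fun k => by positivity) hterm (hgeo.mul_left _)
  have htail : (∑' k : ℕ, ‖p.coeff (k + 2)‖ * r ^ (k + 2)) ≤ (1 - A ^ 2) * r ^ 2 / (1 - r) := by
    calc (∑' k : ℕ, ‖p.coeff (k + 2)‖ * r ^ (k + 2))
        ≤ ∑' k : ℕ, (1 - A ^ 2) * r ^ (k + 2) := Summable.tsum_le_tsum hterm hsumm (hgeo.mul_left _)
      _ = (1 - A ^ 2) * ∑' k : ℕ, r ^ (k + 2) := tsum_mul_left
      _ = (1 - A ^ 2) * (r ^ 2 * (1 - r)⁻¹) := by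
          congr 1
          calc (∑' k : ℕ, r ^ (k + 2)) = ∑' k : ℕ, r ^ 2 * r ^ k := by
                apply tsum_congr
                intro k
                rw [← pow_add]
                ring
            _ = r ^ 2 * ∑' k : ℕ, r ^ k := tsum_mul_left
            _ = r ^ 2 * (1 - r)⁻¹ := by rw [tsum_geometric_of_lt_one hr0 hr1]
      _ = (1 - A ^ 2) * r ^ 2 / (1 - r) := by ring
  -- Schwarz-Pick at w = z^m
  set w : ℂ := z ^ m with hw_def
  have hwnorm : ‖w‖ = r ^ m := by rw [hw_def, norm_pow, hz]
  have hρr : r ^ m ≤ r := pow_le_of_le_one hr0 hr1.le (by omega)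
  have hw1 : ‖w‖ < 1 := by rw [hwnorm]; exact lt_of_le_of_lt hρr hr1
  have hval := schwarz_pick_value hd hb hw1
  have hder := schwarz_pick_deriv hd hb hw1
  rw [hwnorm] at hval hder
  -- the root condition
  set ρ : ℝ := r ^ m with hρ_def
  have hρ0 : 0 ≤ ρ := by positivity
  have H : 2 * r * (1 - r) + 2 * r ^ 2 * (1 + ρ) ^ 2 ≤ (1 - ρ ^ 2) * (1 - r) := by
    nlinarith [hroot]
  -- rewrite the goal
  have hgoal_eq : (∑' k : ℕ, ‖iteratedDeriv (k + 2) f 0 / ((Nat.factorial (k + 2) : ℂ))‖ * r ^ (k + 2))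
      = ∑' k : ℕ, ‖p.coeff (k + 2)‖ * r ^ (k + 2) := by
    apply tsum_congr
    intro k
    rw [hcoeff (k + 2)]
  rw [hgoal_eq, hz]
  have hS0 : 0 ≤ ∑' k : ℕ, ‖p.coeff (k + 2)‖ * r ^ (k + 2) :=
    tsum_nonneg (fun k => by positivity)
  have h1r : (0:ℝ) < 1 - r := by linarith
  exact final_real_ineq A (‖f w‖) (‖deriv f w‖) _ r ρ hA0 hA1 (norm_nonneg _) (norm_nonneg _)
    (by rw [← hA_def] at hval; linarith [hval])
    (by linarith [hder])
    hS0 ((le_div_iff₀ h1r).mp htail) hρ0 hρr hr1 H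
end

section
/- For a ∈ [0,1), r ∈ [0,1), m ≥ 1, and the function f(z) = (a+z)/(1+az), the extremal identity |f(rᵐ)| + rᵐ|f'(rᵐ)| + ∑_{k≥2}|aₖ|rᵏ = 1 + (1-a)·P/((1+a rᵐ)²(1-a r)) holds, where aₖ are the Taylor coefficients of f and P = (1 - a r)(a r²ᵐ + 2rᵐ - 1) + a r²(1+a)(1 + a rᵐ)². -/
private lemma deriv_moebius (a z : ℂ) (hz : 1 + a * z ≠ 0) :
    deriv (fun w => (a + w) / (1 + a * w)) z = (1 - a ^ 2) / (1 + a * z) ^ 2 := by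
  have h1 : HasDerivAt (fun w : ℂ => a + w) 1 z := (hasDerivAt_id z).const_add a
  have h2 : HasDerivAt (fun w : ℂ => 1 + a * w) a z := by
    simpa using ((hasDerivAt_id z).const_mul a).const_add 1
  rw [(h1.fun_div h2 hz).deriv]
  congr 1
  ring

private lemma iter_moebius (a : ℂ) : ∀ n : ℕ, 1 ≤ n → ∀ z : ℂ, 1 + a * z ≠ 0 →
    iteratedDeriv n (fun w => (a + w) / (1 + a * w)) z
      = (1 - a ^ 2) * (-a) ^ (n - 1) * (n.factorial : ℂ) / (1 + a * z) ^ (n + 1) := by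
  intro n hn
  induction n, hn using Nat.le_induction with
  | base =>
    intro z hz
    simpa [iteratedDeriv_one] using deriv_moebius a z hz
  | succ n hn ih =>
    obtain ⟨p, rfl⟩ : ∃ p, n = p + 1 := ⟨n - 1, (Nat.sub_add_cancel hn).symm⟩
    intro z hz
    rw [iteratedDeriv_succ]
    have hopen : IsOpen {w : ℂ | 1 + a * w ≠ 0} :=
      isOpen_ne.preimage (by continuity)
    have hev : iteratedDeriv (p+1) (fun w => (a + w) / (1 + a * w)) =ᶠ[nhds z]
        fun w => (1 - a ^ 2) * (-a) ^ p * ((p+1).factorial : ℂ) / (1 + a * w) ^ (p + 2) := by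
      filter_upwards [hopen.mem_nhds hz] with w hw
      simpa using ih w hw
    rw [hev.deriv_eq]
    have hb : HasDerivAt (fun w : ℂ => 1 + a * w) a z := by
      simpa using ((hasDerivAt_id z).const_mul a).const_add 1
    have h2 : HasDerivAt (fun w : ℂ => (1 + a * w) ^ (p + 2))
        ((p + 2 : ℕ) * (1 + a * z) ^ (p + 1) * a) z := by
      simpa using hb.fun_pow (p + 2)
    rw [((hasDerivAt_const z ((1 - a ^ 2) * (-a) ^ p * ((p+1).factorial : ℂ))).fun_div h2
      (pow_ne_zero _ hz)).deriv]
    have hfac : (((p + 1 + 1).factorial : ℕ) : ℂ) = (p + 2) * ((p+1).factorial : ℂ) := by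
      push_cast [Nat.factorial_succ]
      ring
    simp only [Nat.add_sub_cancel]
    rw [hfac]
    field_simp
    push_cast
    ring

/-- Extremal identity for the Möbius function `f(z) = (a+z)/(1+az)`:
`|f(rᵐ)| + rᵐ|f'(rᵐ)| + ∑_{k≥2}|aₖ|rᵏ = 1 + (1-a)P/((1+a rᵐ)²(1-a r))`. -/
theorem moebius_extremal_identity (a r : ℝ) (ha : a ∈ Set.Ico (0 : ℝ) 1)
    (hr : r ∈ Set.Ico (0 : ℝ) 1) (m : ℕ) (hm : 1 ≤ m) :
    let f : ℂ → ℂ := fun z => ((a : ℂ) + z) / (1 + (a : ℂ) * z)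
    ‖f ((r : ℂ) ^ m)‖ + r ^ m * ‖deriv f ((r : ℂ) ^ m)‖ +
      (∑' k : ℕ, ‖iteratedDeriv (k + 2) f 0 / (Nat.factorial (k + 2) : ℂ)‖ * r ^ (k + 2)) =
    1 + (1 - a) *
        ((1 - a * r) * (a * r ^ (2 * m) + 2 * r ^ m - 1) +
          a * r ^ 2 * (1 + a) * (1 + a * r ^ m) ^ 2) /
      ((1 + a * r ^ m) ^ 2 * (1 - a * r)) := by
  intro f
  obtain ⟨ha0, ha1⟩ := ha
  obtain ⟨hr0, hr1⟩ := hr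
  have hrm0 : (0:ℝ) ≤ r ^ m := pow_nonneg hr0 m
  have hrm1 : r ^ m < 1 := pow_lt_one₀ hr0 hr1 (by omega)
  have hden : (0:ℝ) < 1 + a * r ^ m := by nlinarith
  have har : a * r < 1 := by nlinarith
  have hden2 : (0:ℝ) < 1 - a * r := by linarith
  have ha2 : (0:ℝ) ≤ 1 - a ^ 2 := by nlinarith
  -- complex nonvanishing at r^m and 0
  have hz1 : (1 : ℂ) + (a:ℂ) * (r:ℂ) ^ m ≠ 0 := by
    have : ((1 + a * r ^ m : ℝ) : ℂ) ≠ 0 := Complex.ofReal_ne_zero.2 (ne_of_gt hden)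
    simpa using this
  have hz0 : (1 : ℂ) + (a:ℂ) * 0 ≠ 0 := by simp
  -- term 1
  have h1 : ‖f ((r : ℂ) ^ m)‖ = (a + r ^ m) / (1 + a * r ^ m) := by
    have : f ((r : ℂ) ^ m) = (((a + r ^ m) / (1 + a * r ^ m) : ℝ) : ℂ) := by
      simp only [f]
      push_cast
      ring
    rw [this, Complex.norm_real, Real.norm_eq_abs, abs_of_nonneg]
    positivity
  -- term 2
  have h2 : ‖deriv f ((r : ℂ) ^ m)‖ = (1 - a ^ 2) / (1 + a * r ^ m) ^ 2 := by
    have hd := deriv_moebius (a : ℂ) ((r:ℂ)^m) hz1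
    have : deriv f ((r : ℂ) ^ m) = (((1 - a ^ 2) / (1 + a * r ^ m) ^ 2 : ℝ) : ℂ) := by
      rw [show f = (fun w => ((a:ℂ) + w) / (1 + (a:ℂ) * w)) from rfl, hd]
      push_cast
      ring
    rw [this, Complex.norm_real, Real.norm_eq_abs, abs_of_nonneg]
    positivity
  -- term 3
  have h3 : (∑' k : ℕ, ‖iteratedDeriv (k + 2) f 0 / (Nat.factorial (k + 2) : ℂ)‖ * r ^ (k + 2))
      = (1 - a ^ 2) * a * r ^ 2 / (1 - a * r) := by
    have hterm : ∀ k : ℕ, ‖iteratedDeriv (k + 2) f 0 / (Nat.factorial (k + 2) : ℂ)‖ * r ^ (k + 2)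
        = ((1 - a ^ 2) * a * r ^ 2) * (a * r) ^ k := by
      intro k
      have hit := iter_moebius (a : ℂ) (k + 2) (by omega) 0 hz0
      have hfne : ((Nat.factorial (k + 2) : ℂ)) ≠ 0 := by
        exact_mod_cast Nat.cast_ne_zero.2 (Nat.factorial_ne_zero (k + 2))
      have hval : iteratedDeriv (k + 2) f 0 / (Nat.factorial (k + 2) : ℂ)
          = (((1 - a ^ 2) * (-a) ^ (k + 1) : ℝ) : ℂ) := by
        rw [show f = (fun w => ((a:ℂ) + w) / (1 + (a:ℂ) * w)) from rfl, hit]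
        field_simp
        rw [show k + 2 - 1 = k + 1 by omega]
        push_cast
        ring
      rw [hval, Complex.norm_real, Real.norm_eq_abs, abs_mul, abs_pow, abs_neg,
        abs_of_nonneg ha2, abs_of_nonneg ha0, mul_pow]
      ring
    rw [tsum_congr hterm, tsum_mul_left,
      tsum_geometric_of_lt_one (by positivity) har]
    field_simp
  rw [h1, h2, h3]
  rw [show (2 * m) = m * 2 by ring, pow_mul]
  have hne1 : (1 + a * r ^ m) ≠ 0 := ne_of_gt hden
  have hne2 : (1 - a * r) ≠ 0 := ne_of_gt hden2
  field_simp
  ring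
end
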